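/- arXiv:2502.12688 — 3 statements merged into one kernel-verified Lean document; each statement's English description precedes it below -/
import Mathlib

section
/- For every fixed ε ∈ (0, 0.9] and integer ℓ ≥ 2, for every ε-excessive tolerance vector Λ = (α₁,…,α_ℓ), every finite simple graph G with minimum degree δ(G) ≥ ⌈109·ℓ·ε⁻²·ln(ℓ·ε⁻¹)⌉, every Λ-tolerance function α and every Λ-list assignment L of G, there exists an α-majority L-colouring of G. -/
set_option linter.unusedSectionVars false
set_option linter.unusedVariables false
open Finset
open scoped Classical

namespace AMCaux

variable {V : Type*} [Fintype V] [DecidableEq V] {ℓ : ℕ} {C : Type*}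

def frac (t : ℝ) : Prop := t ≠ 0 ∧ t ≠ 1

noncomputable def load (G : SimpleGraph V) [DecidableRel G.Adj] (L : Sym2 V → Fin ℓ → C)
    (x : Sym2 V → Fin ℓ → ℝ) (v : V) (c : C) : ℝ :=
  ∑ e ∈ G.incidenceFinset v, ∑ i, if L e i = c then x e i else 0

noncomputable def fracSet (G : SimpleGraph V) [DecidableRel G.Adj]
    (x : Sym2 V → Fin ℓ → ℝ) : Finset (Sym2 V × Fin ℓ) :=
  (G.edgeFinset ×ˢ univ).filter fun p => frac (x p.1 p.2)

noncomputable def nzcount (G : SimpleGraph V) [DecidableRel G.Adj] (L : Sym2 V → Fin ℓ → C)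
    (x : Sym2 V → Fin ℓ → ℝ) (v : V) (c : C) : ℕ :=
  ((G.incidenceFinset v ×ˢ univ).filter fun p => L p.1 p.2 = c ∧ x p.1 p.2 ≠ 0).card

noncomputable def fccount (G : SimpleGraph V) [DecidableRel G.Adj] (L : Sym2 V → Fin ℓ → C)
    (x : Sym2 V → Fin ℓ → ℝ) (v : V) (c : C) : ℕ :=
  ((G.incidenceFinset v ×ˢ univ).filter fun p => L p.1 p.2 = c ∧ frac (x p.1 p.2)).card

structure Inv (G : SimpleGraph V) [DecidableRel G.Adj] (L : Sym2 V → Fin ℓ → C)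
    (good : Finset (Fin ℓ)) (cap : V → C → ℝ) (x : Sym2 V → Fin ℓ → ℝ) : Prop where
  nonneg : ∀ e ∈ G.edgeFinset, ∀ i, 0 ≤ x e i
  le_one : ∀ e ∈ G.edgeFinset, ∀ i, x e i ≤ 1
  supp : ∀ e ∈ G.edgeFinset, ∀ i, i ∉ good → x e i = 0
  sum_one : ∀ e ∈ G.edgeFinset, ∑ i, x e i = 1
  hC : ∀ v c, 5 ≤ fccount G L x v c → load G L x v c ≤ cap v c
  hD : ∀ v c, (nzcount G L x v c : ℝ) ≤ cap v c + 4 ∨ 5 ≤ fccount G L x v c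

variable {G : SimpleGraph V} [DecidableRel G.Adj] {L : Sym2 V → Fin ℓ → C}
  {x x' : Sym2 V → Fin ℓ → ℝ}

lemma mem_fracSet {p : Sym2 V × Fin ℓ} :
    p ∈ fracSet G x ↔ p.1 ∈ G.edgeFinset ∧ frac (x p.1 p.2) := by
  simp [fracSet]

lemma inc_subset_edge {v : V} {e : Sym2 V} (he : e ∈ G.incidenceFinset v) :
    e ∈ G.edgeFinset := by
  rw [SimpleGraph.mem_incidenceFinset] at he
  exact SimpleGraph.mem_edgeFinset.2 (G.incidenceSet_subset v he)

lemma load_eq_sum_pairs (v : V) (c : C) :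
    load G L x v c
      = ∑ p ∈ (G.incidenceFinset v ×ˢ univ).filter (fun p => L p.1 p.2 = c), x p.1 p.2 := by
  rw [load, Finset.sum_filter, Finset.sum_product]

lemma nzcount_mono (v : V) (c : C)
    (h : ∀ e i, e ∈ G.edgeFinset → x' e i ≠ 0 → x e i ≠ 0) :
    nzcount G L x' v c ≤ nzcount G L x v c := by
  apply Finset.card_le_card
  intro p hp
  simp only [Finset.mem_filter, Finset.mem_product] at hp ⊢
  exact ⟨hp.1, hp.2.1, h _ _ (inc_subset_edge hp.1.1) hp.2.2⟩

lemma fccount_mono (v : V) (c : C)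
    (h : ∀ e i, e ∈ G.edgeFinset → frac (x' e i) → frac (x e i)) :
    fccount G L x' v c ≤ fccount G L x v c := by
  apply Finset.card_le_card
  intro p hp
  simp only [Finset.mem_filter, Finset.mem_product] at hp ⊢
  exact ⟨hp.1, hp.2.1, h _ _ (inc_subset_edge hp.1.1) hp.2.2⟩

lemma load_le_nzcount (v : V) (c : C)
    (h1 : ∀ e ∈ G.edgeFinset, ∀ i, x e i ≤ 1) :
    load G L x v c ≤ (nzcount G L x v c : ℝ) := by
  rw [load_eq_sum_pairs]
  calc ∑ p ∈ ((G.incidenceFinset v ×ˢ univ).filter fun p => L p.1 p.2 = c), x p.1 p.2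
      ≤ ∑ p ∈ ((G.incidenceFinset v ×ˢ univ).filter fun p => L p.1 p.2 = c),
          (if x p.1 p.2 ≠ 0 then (1:ℝ) else 0) := by
        apply Finset.sum_le_sum
        intro p hp
        simp only [Finset.mem_filter, Finset.mem_product] at hp
        by_cases h : x p.1 p.2 = 0
        · simp [h]
        · simp only [h, if_pos, ne_eq, not_false_eq_true, if_true]
          exact h1 _ (inc_subset_edge hp.1.1) _
    _ = (nzcount G L x v c : ℝ) := by
        rw [← Finset.sum_filter, Finset.filter_filter, nzcount]
        simp


lemma mem_incidenceFinset' {v : V} {e : Sym2 V} :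
    e ∈ G.incidenceFinset v ↔ e ∈ G.edgeFinset ∧ v ∈ e := by
  rw [SimpleGraph.mem_incidenceFinset]
  simp [SimpleGraph.incidenceSet]

lemma card_mem_sym2 {e : Sym2 V} (he : e ∈ G.edgeFinset) :
    (univ.filter fun v => v ∈ e).card = 2 := by
  induction e with
  | _ a b =>
    rw [SimpleGraph.mem_edgeFinset] at he
    have hne : a ≠ b := G.ne_of_adj he
    have : (univ.filter fun v => v ∈ s(a,b)) = {a, b} := by
      ext v; simp [Sym2.mem_iff]
    rw [this, Finset.card_insert_of_notMem (by simp [hne]), Finset.card_singleton]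

lemma sum_boole_card {ι : Type*} (s : Finset ι) (f : ι → ℝ)
    (h : ∀ i ∈ s, f i = 0 ∨ f i = 1) :
    ∑ i ∈ s, f i = ((s.filter fun i => f i = 1).card : ℝ) := by
  rw [← Finset.sum_filter_add_sum_filter_not s (fun i => f i = 1)]
  have h1 : ∑ i ∈ s.filter (fun i => f i = 1), f i
      = ((s.filter fun i => f i = 1).card : ℝ) := by
    rw [Finset.sum_congr rfl (fun i hi => (Finset.mem_filter.1 hi).2), Finset.sum_const,
      nsmul_eq_mul, mul_one]
  have h2 : ∑ i ∈ s.filter (fun i => ¬ f i = 1), f i = 0 := by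
    apply Finset.sum_eq_zero
    intro i hi
    rcases Finset.mem_filter.1 hi with ⟨his, hno⟩
    rcases h i his with h0 | h1' 
    · exact h0
    · exact absurd h1' hno
  rw [h1, h2, add_zero]

/-- every edge containing a fractional variable contains at least two of them -/
lemma two_le_fracIdx {e : Sym2 V} (he : e ∈ G.edgeFinset)
    (hsum : ∑ i, x e i = 1)
    (hnn : ∀ i, 0 ≤ x e i) (hle : ∀ i, x e i ≤ 1)
    {i₀ : Fin ℓ} (hi₀ : frac (x e i₀)) :
    2 ≤ (univ.filter fun i => frac (x e i)).card := by
  by_contra hlt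
  push_neg at hlt
  -- the filter is exactly {i₀}
  have hmem : i₀ ∈ univ.filter fun i => frac (x e i) := by simp [hi₀]
  have hcard : (univ.filter fun i => frac (x e i)).card = 1 := by
    have : 1 ≤ (univ.filter fun i => frac (x e i)).card := Finset.card_pos.2 ⟨i₀, hmem⟩
    omega
  have hset : (univ.filter fun i => frac (x e i)) = {i₀} :=
    Finset.eq_singleton_iff_unique_mem.2 ⟨hmem, fun j hj => by
      rcases Finset.card_eq_one.1 hcard with ⟨k, hk⟩
      rw [hk] at hj hmem
      simp at hj hmem; omega⟩
  have hrest : ∀ i, i ≠ i₀ → (x e i = 0 ∨ x e i = 1) := by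
    intro i hi
    by_contra hcon
    push_neg at hcon
    have : i ∈ univ.filter fun i => frac (x e i) := by exact Finset.mem_filter.2 ⟨Finset.mem_univ _, hcon⟩
    rw [hset] at this; simp at this; exact hi this
  have hsplit : x e i₀ + ∑ i ∈ univ.erase i₀, x e i = 1 := by
    rw [Finset.add_sum_erase univ (x e) (Finset.mem_univ i₀)]
    exact hsum
  have hz := sum_boole_card (univ.erase i₀) (x e) (fun i hi =>
    hrest i (Finset.ne_of_mem_erase hi))
  set m := ((univ.erase i₀).filter fun i => x e i = 1).card with hm
  rw [hz] at hsplit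
  have h0 : 0 < x e i₀ := lt_of_le_of_ne (hnn i₀) (Ne.symm hi₀.1)
  have h1 : x e i₀ < 1 := lt_of_le_of_ne (hle i₀) hi₀.2
  have : (m:ℝ) < 1 := by linarith
  have : m = 0 := by exact_mod_cast Nat.lt_one_iff.1 (by exact_mod_cast this)
  rw [this] at hsplit
  simp at hsplit
  linarith

lemma fccount_eq_filter_fracSet (v : V) (c : C) :
    fccount G L x v c
      = ((fracSet G x).filter fun p => v ∈ p.1 ∧ L p.1 p.2 = c).card := by
  refine congrArg Finset.card ?_
  ext p
  simp only [Finset.mem_filter, Finset.mem_product, mem_fracSet, mem_incidenceFinset',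
    Finset.mem_univ, and_true]
  tauto


noncomputable def colours (G : SimpleGraph V) [DecidableRel G.Adj]
    (L : Sym2 V → Fin ℓ → C) : Finset C :=
  (G.edgeFinset ×ˢ (univ : Finset (Fin ℓ))).image fun p => L p.1 p.2

lemma mem_colours {e : Sym2 V} (he : e ∈ G.edgeFinset) (i : Fin ℓ) :
    L e i ∈ colours G L :=
  Finset.mem_image.2 ⟨(e, i), Finset.mem_product.2 ⟨he, Finset.mem_univ _⟩, rfl⟩

lemma two_mul_card_fracEdges_le
    (hsum : ∀ e ∈ G.edgeFinset, ∑ i, x e i = 1)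
    (hnn : ∀ e ∈ G.edgeFinset, ∀ i, 0 ≤ x e i)
    (hle : ∀ e ∈ G.edgeFinset, ∀ i, x e i ≤ 1) :
    2 * ((fracSet G x).image Prod.fst).card ≤ (fracSet G x).card := by
  set FE := (fracSet G x).image Prod.fst with hFE
  have hfib : (fracSet G x).card
      = ∑ e ∈ FE, ((fracSet G x).filter fun p => p.1 = e).card :=
    Finset.card_eq_sum_card_fiberwise (fun p hp => Finset.mem_image_of_mem _ hp)
  have hper : ∀ e ∈ FE, 2 ≤ ((fracSet G x).filter fun p => p.1 = e).card := by
    intro e he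
    rcases Finset.mem_image.1 he with ⟨p, hp, hpe⟩
    have hpf := mem_fracSet.1 hp
    have heE : e ∈ G.edgeFinset := hpe ▸ hpf.1
    have hfr : frac (x e p.2) := by rw [← hpe]; exact hpf.2
    have h2 := two_le_fracIdx heE (hsum e heE) (hnn e heE) (hle e heE) hfr
    refine le_trans h2 (Finset.card_le_card_of_injOn (fun i => (e, i)) ?_ ?_)
    · intro i hi
      simp only [Finset.mem_coe, Finset.mem_filter, Finset.mem_univ, true_and] at hi
      exact Finset.mem_filter.2 ⟨mem_fracSet.2 ⟨heE, hi⟩, rfl⟩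
    · intro i _ j _ hij
      exact congrArg Prod.snd hij
  calc 2 * FE.card = ∑ _e ∈ FE, 2 := by rw [Finset.sum_const, smul_eq_mul, mul_comm]
    _ ≤ ∑ e ∈ FE, ((fracSet G x).filter fun p => p.1 = e).card := Finset.sum_le_sum hper
    _ = (fracSet G x).card := hfib.symm

lemma sum_fccount_eq :
    ∑ q ∈ (univ : Finset V) ×ˢ colours G L, fccount G L x q.1 q.2
      = 2 * (fracSet G x).card := by
  have h1 : ∀ q : V × C, fccount G L x q.1 q.2
      = ∑ p ∈ fracSet G x, if q.1 ∈ p.1 ∧ L p.1 p.2 = q.2 then 1 else 0 := by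
    intro q
    rw [fccount_eq_filter_fracSet, Finset.card_filter]
  calc ∑ q ∈ (univ : Finset V) ×ˢ colours G L, fccount G L x q.1 q.2
      = ∑ q ∈ (univ : Finset V) ×ˢ colours G L, ∑ p ∈ fracSet G x,
          if q.1 ∈ p.1 ∧ L p.1 p.2 = q.2 then 1 else 0 := by
        exact Finset.sum_congr rfl fun q _ => h1 q
    _ = ∑ p ∈ fracSet G x, ∑ q ∈ (univ : Finset V) ×ˢ colours G L,
          if q.1 ∈ p.1 ∧ L p.1 p.2 = q.2 then 1 else 0 := Finset.sum_comm
    _ = ∑ p ∈ fracSet G x, 2 := by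
        refine Finset.sum_congr rfl fun p hp => ?_
        have hpf := mem_fracSet.1 hp
        rw [← Finset.card_filter]
        have hprod : ((univ : Finset V) ×ˢ colours G L).filter
            (fun q => q.1 ∈ p.1 ∧ L p.1 p.2 = q.2)
            = (univ.filter fun v => v ∈ p.1) ×ˢ (colours G L).filter (fun b => L p.1 p.2 = b) := by
          ext q
          simp only [Finset.mem_filter, Finset.mem_product, Finset.mem_univ, true_and]
          tauto
        rw [hprod, Finset.card_product, card_mem_sym2 hpf.1, Finset.filter_eq,
          if_pos (mem_colours hpf.1 p.2), Finset.card_singleton]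
    _ = 2 * (fracSet G x).card := by rw [Finset.sum_const, smul_eq_mul, mul_comm]

lemma five_mul_card_active_le :
    5 * (((univ : Finset V) ×ˢ colours G L).filter
        fun q => 5 ≤ fccount G L x q.1 q.2).card ≤ 2 * (fracSet G x).card := by
  set AL := ((univ : Finset V) ×ˢ colours G L).filter
      fun q => 5 ≤ fccount G L x q.1 q.2 with hAL
  calc 5 * AL.card = ∑ _q ∈ AL, 5 := by rw [Finset.sum_const, smul_eq_mul, mul_comm]
    _ ≤ ∑ q ∈ AL, fccount G L x q.1 q.2 :=
        Finset.sum_le_sum fun q hq => (Finset.mem_filter.1 hq).2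
    _ ≤ ∑ q ∈ (univ : Finset V) ×ˢ colours G L, fccount G L x q.1 q.2 :=
        Finset.sum_le_sum_of_subset (Finset.filter_subset _ _)
    _ = 2 * (fracSet G x).card := sum_fccount_eq


lemma exists_kernel_vector (hF : 0 < (fracSet G x).card)
    (hsum : ∀ e ∈ G.edgeFinset, ∑ i, x e i = 1)
    (hnn : ∀ e ∈ G.edgeFinset, ∀ i, 0 ≤ x e i)
    (hle : ∀ e ∈ G.edgeFinset, ∀ i, x e i ≤ 1) :
    ∃ y : Sym2 V → Fin ℓ → ℝ,
      (∀ e i, (e, i) ∉ fracSet G x → y e i = 0) ∧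
      (∃ e i, y e i ≠ 0) ∧
      (∀ e, ∑ i, y e i = 0) ∧
      (∀ v c, 5 ≤ fccount G L x v c →
        ∑ p ∈ (G.incidenceFinset v ×ˢ univ).filter (fun p => L p.1 p.2 = c),
          y p.1 p.2 = 0) := by
  set FE := (fracSet G x).image Prod.fst with hFE
  set AL := ((univ : Finset V) ×ˢ colours G L).filter
      (fun q => 5 ≤ fccount G L x q.1 q.2) with hAL
  set M : Matrix (↥FE ⊕ ↥AL) ↥(fracSet G x) ℝ := Matrix.of (Sum.elim
    (fun (e : ↥FE) (p : ↥(fracSet G x)) =>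
      if (p : Sym2 V × Fin ℓ).1 = (e : Sym2 V) then (1:ℝ) else 0)
    (fun (q : ↥AL) (p : ↥(fracSet G x)) =>
      if (q : V × C).1 ∈ (p : Sym2 V × Fin ℓ).1 ∧
          L (p : Sym2 V × Fin ℓ).1 (p : Sym2 V × Fin ℓ).2 = (q : V × C).2
        then (1:ℝ) else 0)) with hM
  have hcards : Fintype.card (↥FE ⊕ ↥AL) < Fintype.card ↥(fracSet G x) := by
    rw [Fintype.card_sum, Fintype.card_coe, Fintype.card_coe, Fintype.card_coe]
    have h1 := two_mul_card_fracEdges_le (G := G) (x := x) hsum hnn hle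
    have h2 := five_mul_card_active_le (G := G) (L := L) (x := x)
    rw [← hFE] at h1
    rw [← hAL] at h2
    omega
  have hker : ∃ z : ↥(fracSet G x) → ℝ, z ≠ 0 ∧ M.mulVecLin z = 0 := by
    by_contra hcon
    push_neg at hcon
    have hinj : Function.Injective M.mulVecLin := by
      rw [← LinearMap.ker_eq_bot, LinearMap.ker_eq_bot']
      intro z hz
      by_contra hz0
      exact (hcon z hz0) hz
    have := LinearMap.finrank_le_finrank_of_injective hinj
    rw [Module.finrank_fintype_fun_eq_card, Module.finrank_fintype_fun_eq_card] at this
    omega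
  obtain ⟨z, hz0, hzker⟩ := hker
  set y : Sym2 V → Fin ℓ → ℝ := fun e i =>
    if h : (e, i) ∈ fracSet G x then z ⟨(e, i), h⟩ else 0 with hy
  have hyz : ∀ p : ↥(fracSet G x), y (p : Sym2 V × Fin ℓ).1 (p : Sym2 V × Fin ℓ).2 = z p := by
    intro p
    rw [hy]
    simp only
    rw [dif_pos (by exact p.2)]
  have hsupp : ∀ e i, (e, i) ∉ fracSet G x → y e i = 0 := by
    intro e i h
    rw [hy]; simp only; rw [dif_neg h]
  refine ⟨y, hsupp, ?_, ?_, ?_⟩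
  · rcases Function.ne_iff.1 hz0 with ⟨p, hp⟩
    exact ⟨(p : Sym2 V × Fin ℓ).1, (p : Sym2 V × Fin ℓ).2, by rw [hyz p]; simpa using hp⟩
  · -- edge rows
    intro e
    have hfix : ∀ e', (∑ p ∈ (fracSet G x).filter (fun p => p.1 = e'), y p.1 p.2)
        = ∑ i, y e' i := by
      intro e'
      have hset : (fracSet G x).filter (fun p => p.1 = e')
          = ({e'} ×ˢ (univ : Finset (Fin ℓ))).filter (fun p => p ∈ fracSet G x) := by
        ext p
        simp only [Finset.mem_filter, Finset.mem_product, Finset.mem_singleton,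
          Finset.mem_univ, and_true]
        tauto
      rw [hset, Finset.sum_filter, Finset.sum_product, Finset.sum_singleton]
      refine Finset.sum_congr rfl fun i _ => ?_
      by_cases h : (e', i) ∈ fracSet G x
      · rw [if_pos h]
      · rw [if_neg h, hsupp e' i h]
    by_cases heFE : e ∈ FE
    · have hrow := congrFun hzker (Sum.inl ⟨e, heFE⟩)
      rw [Matrix.mulVecLin_apply, Matrix.mulVec, Pi.zero_apply, dotProduct] at hrow
      have hrow' : ∑ p : ↥(fracSet G x),
          (if (p : Sym2 V × Fin ℓ).1 = e
            then y (p : Sym2 V × Fin ℓ).1 (p : Sym2 V × Fin ℓ).2 else 0) = 0 := by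
        refine Eq.trans (Finset.sum_congr rfl fun p _ => ?_) hrow
        rw [← hyz p, hM]
        simp only [Matrix.of_apply, Sum.elim_inl, ite_mul, one_mul, zero_mul]
      have h3 : ∑ p ∈ (fracSet G x).filter (fun p => p.1 = e), y p.1 p.2 = 0 := by
        rw [Finset.sum_filter,
          ← Finset.sum_coe_sort (fracSet G x) (fun p => if p.1 = e then y p.1 p.2 else 0)]
        exact hrow'
      rw [hfix] at h3
      exact h3
    · refine Finset.sum_eq_zero fun i _ => hsupp e i fun hmem => ?_
      exact heFE (Finset.mem_image_of_mem Prod.fst hmem)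
  · -- load rows
    intro v c h5
    have hcmem : (v, c) ∈ AL := by
      have hpos : 0 < fccount G L x v c := lt_of_lt_of_le (by norm_num) h5
      rw [fccount] at hpos
      rcases Finset.card_pos.1 hpos with ⟨p, hp⟩
      simp only [Finset.mem_filter, Finset.mem_product] at hp
      have : L p.1 p.2 ∈ colours G L := mem_colours (inc_subset_edge hp.1.1) p.2
      rw [hp.2.1] at this
      exact Finset.mem_filter.2 ⟨Finset.mem_product.2 ⟨Finset.mem_univ _, this⟩, h5⟩
    have hrow := congrFun hzker (Sum.inr ⟨(v, c), hcmem⟩)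
    rw [Matrix.mulVecLin_apply, Matrix.mulVec, Pi.zero_apply, dotProduct] at hrow
    have hrow' : ∑ p : ↥(fracSet G x),
        (if v ∈ (p : Sym2 V × Fin ℓ).1 ∧ L (p : Sym2 V × Fin ℓ).1 (p : Sym2 V × Fin ℓ).2 = c
          then y (p : Sym2 V × Fin ℓ).1 (p : Sym2 V × Fin ℓ).2 else 0) = 0 := by
      refine Eq.trans (Finset.sum_congr rfl fun p _ => ?_) hrow
      rw [← hyz p, hM]
      simp only [Matrix.of_apply, Sum.elim_inr, ite_mul, one_mul, zero_mul]
    have h3 : ∑ p ∈ (fracSet G x).filter (fun p => v ∈ p.1 ∧ L p.1 p.2 = c), y p.1 p.2 = 0 := by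
      rw [Finset.sum_filter,
        ← Finset.sum_coe_sort (fracSet G x) (fun p => if v ∈ p.1 ∧ L p.1 p.2 = c then y p.1 p.2 else 0)]
      exact hrow'
    rw [← h3]
    have hsub : (fracSet G x).filter (fun p => v ∈ p.1 ∧ L p.1 p.2 = c)
        ⊆ (G.incidenceFinset v ×ˢ univ).filter (fun p => L p.1 p.2 = c) := by
      intro p hp
      simp only [Finset.mem_filter, mem_fracSet, Finset.mem_product,
        mem_incidenceFinset', Finset.mem_univ, and_true] at hp ⊢
      exact ⟨⟨hp.1.1, hp.2.1⟩, hp.2.2⟩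
    rw [Finset.sum_subset hsub]
    intro p hp hnp
    simp only [Finset.mem_filter, Finset.mem_product, mem_incidenceFinset',
      Finset.mem_univ, and_true] at hp
    by_contra hy0
    have hpfs : p ∈ fracSet G x := by
      by_contra hnfs
      exact hy0 (hsupp p.1 p.2 (by simpa using hnfs))
    exact hnp (Finset.mem_filter.2 ⟨hpfs, hp.1.2, hp.2⟩)


lemma nzcount_le_load_add_fccount (v : V) (c : C)
    (hnn : ∀ e ∈ G.edgeFinset, ∀ i, 0 ≤ x e i) :
    (nzcount G L x v c : ℝ) ≤ load G L x v c + (fccount G L x v c : ℝ) := by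
  set B := (G.incidenceFinset v ×ˢ (univ : Finset (Fin ℓ))).filter
    (fun p => L p.1 p.2 = c) with hB
  have h1 : nzcount G L x v c = (B.filter (fun p => x p.1 p.2 ≠ 0)).card := by
    rw [nzcount, hB, Finset.filter_filter]
  have h2 : fccount G L x v c = (B.filter (fun p => frac (x p.1 p.2))).card := by
    rw [fccount, hB, Finset.filter_filter]
  have hsub : B.filter (fun p => x p.1 p.2 ≠ 0)
      ⊆ B.filter (fun p => x p.1 p.2 = 1) ∪ B.filter (fun p => frac (x p.1 p.2)) := by
    intro p hp
    rcases Finset.mem_filter.1 hp with ⟨hpB, hpz⟩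
    by_cases h1' : x p.1 p.2 = 1
    · exact Finset.mem_union_left _ (Finset.mem_filter.2 ⟨hpB, h1'⟩)
    · exact Finset.mem_union_right _ (Finset.mem_filter.2 ⟨hpB, hpz, h1'⟩)
  have hcard : nzcount G L x v c
      ≤ (B.filter (fun p => x p.1 p.2 = 1)).card + fccount G L x v c := by
    rw [h1, h2]
    exact le_trans (Finset.card_le_card hsub) (Finset.card_union_le _ _)
  have hload : ((B.filter (fun p => x p.1 p.2 = 1)).card : ℝ) ≤ load G L x v c := by
    rw [load_eq_sum_pairs, ← hB]
    have : ((B.filter (fun p => x p.1 p.2 = 1)).card : ℝ)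
        = ∑ p ∈ B.filter (fun p => x p.1 p.2 = 1), x p.1 p.2 := by
      rw [Finset.sum_congr rfl (fun p hp => (Finset.mem_filter.1 hp).2), Finset.sum_const,
        nsmul_eq_mul, mul_one]
    rw [this]
    refine Finset.sum_le_sum_of_subset_of_nonneg (Finset.filter_subset _ _) ?_
    intro p hp _
    rw [hB] at hp
    simp only [Finset.mem_filter, Finset.mem_product] at hp
    exact hnn _ (inc_subset_edge hp.1.1) _
  calc (nzcount G L x v c : ℝ)
      ≤ ((B.filter (fun p => x p.1 p.2 = 1)).card : ℝ) + (fccount G L x v c : ℝ) := by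
        exact_mod_cast hcard
    _ ≤ load G L x v c + (fccount G L x v c : ℝ) := by linarith

lemma load_shift (v : V) (c : C) (l : ℝ) (y : Sym2 V → Fin ℓ → ℝ) :
    load G L (fun e i => x e i + l * y e i) v c
      = load G L x v c + l * ∑ p ∈ (G.incidenceFinset v ×ˢ univ).filter
          (fun p => L p.1 p.2 = c), y p.1 p.2 := by
  rw [load_eq_sum_pairs, load_eq_sum_pairs, Finset.mul_sum, ← Finset.sum_add_distrib]

lemma exists_step (good : Finset (Fin ℓ)) (cap : V → C → ℝ)
    (hinv : Inv G L good cap x) (hF : 0 < (fracSet G x).card) :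
    ∃ x' : Sym2 V → Fin ℓ → ℝ,
      Inv G L good cap x' ∧ (fracSet G x').card < (fracSet G x).card := by
  obtain ⟨y, hysupp, ⟨e₀, i₀, hy0⟩, hyrow, hyload⟩ :=
    exists_kernel_vector hF hinv.sum_one hinv.nonneg hinv.le_one
  have hfrac_bounds : ∀ p : Sym2 V × Fin ℓ, p ∈ fracSet G x →
      0 < x p.1 p.2 ∧ x p.1 p.2 < 1 := by
    intro p hp
    rcases mem_fracSet.1 hp with ⟨hpE, hpf⟩
    exact ⟨lt_of_le_of_ne (hinv.nonneg _ hpE _) (Ne.symm hpf.1),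
      lt_of_le_of_ne (hinv.le_one _ hpE _) hpf.2⟩
  set cand := (fracSet G x).filter (fun p => y p.1 p.2 ≠ 0) with hcand
  have hp₀ : (e₀, i₀) ∈ cand := by
    refine Finset.mem_filter.2 ⟨?_, hy0⟩
    by_contra h
    exact hy0 (hysupp _ _ h)
  set step : Sym2 V × Fin ℓ → ℝ := fun p =>
    if 0 < y p.1 p.2 then (1 - x p.1 p.2) / y p.1 p.2 else x p.1 p.2 / (- y p.1 p.2)
    with hstep
  have hstep_pos : ∀ p ∈ cand, 0 < step p := by
    intro p hp
    rcases Finset.mem_filter.1 hp with ⟨hpf, hpy⟩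
    rcases hfrac_bounds p hpf with ⟨hx0, hx1⟩
    rw [hstep]
    by_cases h : 0 < y p.1 p.2
    · simp only [h, if_pos]
      exact div_pos (by linarith) h
    · simp only [h, if_neg, if_false]
      have : y p.1 p.2 < 0 := lt_of_le_of_ne (not_lt.1 h) hpy
      exact div_pos hx0 (by linarith)
  have hne : ((cand.image step)).Nonempty := ⟨step (e₀, i₀), Finset.mem_image_of_mem _ hp₀⟩
  set l := (cand.image step).min' hne with hl
  obtain ⟨pstar, hpstar, hpstar_eq⟩ := Finset.mem_image.1 ((cand.image step).min'_mem hne)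
  have hl_le : ∀ p ∈ cand, l ≤ step p := fun p hp =>
    Finset.min'_le _ _ (Finset.mem_image_of_mem _ hp)
  have hlpos : 0 < l := by
    rw [hl, ← hpstar_eq]
    exact hstep_pos pstar hpstar
  set x' : Sym2 V → Fin ℓ → ℝ := fun e i => x e i + l * y e i with hx'
  have hfix : ∀ e i, (e, i) ∉ fracSet G x → x' e i = x e i := by
    intro e i h
    rw [hx']
    simp only
    rw [hysupp e i h, mul_zero, add_zero]
  have hbounds : ∀ p ∈ fracSet G x, 0 ≤ x' p.1 p.2 ∧ x' p.1 p.2 ≤ 1 := by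
    intro p hp
    rcases hfrac_bounds p hp with ⟨hx0, hx1⟩
    by_cases hy : y p.1 p.2 = 0
    · rw [hx']
      simp only [hy, mul_zero, add_zero]
      exact ⟨le_of_lt hx0, le_of_lt hx1⟩
    · have hpc : p ∈ cand := Finset.mem_filter.2 ⟨hp, hy⟩
      have hls := hl_le p hpc
      rw [hx']
      simp only
      by_cases hypos : 0 < y p.1 p.2
      · have hstep_eq : step p = (1 - x p.1 p.2) / y p.1 p.2 := by
          rw [hstep]; simp only [hypos, if_pos]
        constructor
        · nlinarith
        · have h1 : l * y p.1 p.2 ≤ step p * y p.1 p.2 :=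
            mul_le_mul_of_nonneg_right hls (le_of_lt hypos)
          rw [hstep_eq, div_mul_cancel₀ _ (ne_of_gt hypos)] at h1
          linarith
      · have hyneg : y p.1 p.2 < 0 := lt_of_le_of_ne (not_lt.1 hypos) hy
        have hstep_eq : step p = x p.1 p.2 / (- y p.1 p.2) := by
          rw [hstep]; simp only [hypos, if_neg, if_false]
        constructor
        · have h1 : step p * y p.1 p.2 ≤ l * y p.1 p.2 :=
            mul_le_mul_of_nonpos_right hls (le_of_lt hyneg)
          have hyne : y p.1 p.2 ≠ 0 := ne_of_lt hyneg
          have h2 : step p * y p.1 p.2 = - x p.1 p.2 := by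
            rw [hstep_eq, div_mul_eq_mul_div, div_neg, mul_div_cancel_right₀ _ hyne]
          linarith
        · nlinarith
  have hstar_int : x' pstar.1 pstar.2 = 0 ∨ x' pstar.1 pstar.2 = 1 := by
    rcases Finset.mem_filter.1 hpstar with ⟨hpf, hpy⟩
    rw [hx']
    simp only
    by_cases hypos : 0 < y pstar.1 pstar.2
    · right
      rw [hl, ← hpstar_eq, hstep]
      simp only [hypos, if_pos]
      rw [div_mul_cancel₀ _ (ne_of_gt hypos)]
      ring
    · left
      have hyneg : y pstar.1 pstar.2 < 0 := lt_of_le_of_ne (not_lt.1 hypos) hpy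
      have hyne : y pstar.1 pstar.2 ≠ 0 := ne_of_lt hyneg
      rw [hl, ← hpstar_eq, hstep]
      simp only [hypos, if_neg, if_false]
      rw [div_mul_eq_mul_div, div_neg, mul_div_cancel_right₀ _ hyne]
      ring
  have hfsub : fracSet G x' ⊆ fracSet G x := by
    intro p hp
    rcases mem_fracSet.1 hp with ⟨hpE, hpf⟩
    by_contra h
    rw [hfix p.1 p.2 (by simpa using h)] at hpf
    exact h (mem_fracSet.2 ⟨hpE, hpf⟩)
  have hstar_not : pstar ∉ fracSet G x' := by
    intro h
    rcases mem_fracSet.1 h with ⟨_, hpf⟩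
    rcases hstar_int with h0 | h1
    · exact hpf.1 h0
    · exact hpf.2 h1
  have hcard : (fracSet G x').card < (fracSet G x).card := by
    refine Finset.card_lt_card ⟨hfsub, fun hsub2 => hstar_not
      (hsub2 (Finset.mem_filter.1 hpstar).1)⟩
  -- frac monotonicity
  have hfrac_mono : ∀ e i, e ∈ G.edgeFinset → frac (x' e i) → frac (x e i) := by
    intro e i heE hf
    by_contra h
    have : (e, i) ∉ fracSet G x := fun hmem => h (mem_fracSet.1 hmem).2
    rw [hfix e i this] at hf
    exact h hf
  have hnz_mono : ∀ e i, e ∈ G.edgeFinset → x' e i ≠ 0 → x e i ≠ 0 := by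
    intro e i heE hnz h0
    have : (e, i) ∉ fracSet G x := by
      intro hmem
      exact (mem_fracSet.1 hmem).2.1 h0
    rw [hfix e i this, h0] at hnz
    exact hnz rfl
  have hload_pres : ∀ v c, 5 ≤ fccount G L x v c → load G L x' v c = load G L x v c := by
    intro v c h5
    rw [hx', load_shift v c l y, hyload v c h5, mul_zero, add_zero]
  refine ⟨x', ⟨?_, ?_, ?_, ?_, ?_, ?_⟩, hcard⟩
  · -- nonneg
    intro e heE i
    by_cases h : (e, i) ∈ fracSet G x
    · exact (hbounds (e, i) h).1
    · rw [hfix e i h]; exact hinv.nonneg e heE i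
  · -- le_one
    intro e heE i
    by_cases h : (e, i) ∈ fracSet G x
    · exact (hbounds (e, i) h).2
    · rw [hfix e i h]; exact hinv.le_one e heE i
  · -- supp
    intro e heE i hig
    have h0 : x e i = 0 := hinv.supp e heE i hig
    have : (e, i) ∉ fracSet G x := by
      intro hmem
      exact (mem_fracSet.1 hmem).2.1 h0
    rw [hfix e i this]; exact h0
  · -- sum_one
    intro e heE
    rw [hx']
    simp only
    rw [Finset.sum_add_distrib, hinv.sum_one e heE, ← Finset.mul_sum, hyrow e, mul_zero,
      add_zero]
  · -- hC
    intro v c h5'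
    have h5 : 5 ≤ fccount G L x v c :=
      le_trans h5' (fccount_mono v c hfrac_mono)
    rw [hload_pres v c h5]
    exact hinv.hC v c h5
  · -- hD
    intro v c
    rcases hinv.hD v c with hle4 | h5
    · left
      refine le_trans ?_ hle4
      exact_mod_cast nzcount_mono v c hnz_mono
    · by_cases h5' : 5 ≤ fccount G L x' v c
      · right; exact h5'
      · left
        have hloadx : load G L x v c ≤ cap v c := hinv.hC v c h5
        have hload' : load G L x' v c = load G L x v c := hload_pres v c h5
        have hnn' : ∀ e ∈ G.edgeFinset, ∀ i, 0 ≤ x' e i := by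
          intro e heE i
          by_cases h : (e, i) ∈ fracSet G x
          · exact (hbounds (e, i) h).1
          · rw [hfix e i h]; exact hinv.nonneg e heE i
        have hkey := nzcount_le_load_add_fccount (L := L) (x := x') v c hnn'
        have hfc4 : (fccount G L x' v c : ℝ) ≤ 4 := by
          exact_mod_cast Nat.lt_succ_iff.1 (not_le.1 h5')
        calc (nzcount G L x' v c : ℝ)
            ≤ load G L x' v c + (fccount G L x' v c : ℝ) := hkey
          _ ≤ cap v c + 4 := by rw [hload']; linarith


lemma round (good : Finset (Fin ℓ)) (cap : V → C → ℝ) :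
    ∀ n (x : Sym2 V → Fin ℓ → ℝ), (fracSet G x).card ≤ n → Inv G L good cap x →
    ∃ xf, Inv G L good cap xf ∧ (fracSet G xf).card = 0 := by
  intro n
  induction n with
  | zero => exact fun x h0 hinv => ⟨x, hinv, Nat.le_zero.1 h0⟩
  | succ n ih =>
    intro x hle hinv
    by_cases h0 : (fracSet G x).card = 0
    · exact ⟨x, hinv, h0⟩
    · obtain ⟨x', hinv', hlt⟩ := exists_step good cap hinv (Nat.pos_of_ne_zero h0)
      exact ih x' (by omega) hinv'

end AMCaux

open AMCaux
set_option maxHeartbeats 1000000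

/-- For fixed `ε ∈ (0, 0.9]` and integer `ℓ ≥ 2`, for every
`ε`-excessive tolerance vector `Λ = (α₁,…,α_ℓ)`, every finite simple graph `G` with
minimum degree at least `⌈109·ℓ·ε⁻²·ln(ℓ·ε⁻¹)⌉`, every `Λ`-tolerance function `α` and
every `Λ`-list assignment `L` of `G`, there is an `α`-majority `L`-colouring of `G`. -/
theorem alpha_majority_colouring_uniform_tolerance_vector
    (ε : ℝ) (hε : ε ∈ Set.Ioc (0 : ℝ) 0.9) (ℓ : ℕ) (hℓ : 2 ≤ ℓ)
    (Λ : Fin ℓ → ℝ) (hΛ : ∀ i, Λ i ∈ Set.Ioo (0 : ℝ) 1) (hΛsum : ∑ i, Λ i = 1 + ε)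
    {V : Type*} [Fintype V] [DecidableEq V] (G : SimpleGraph V) [DecidableRel G.Adj]
    (hδ : ∀ v : V, ⌈(109 : ℝ) * ℓ * (ε ^ 2)⁻¹ * Real.log (ℓ * ε⁻¹)⌉₊ ≤ G.degree v)
    (C : Type*) (α : C → ℝ) (hα : ∀ c, α c ∈ Set.Ioo (0 : ℝ) 1)
    (hαΛ : ∀ c, ∃ i, α c = Λ i)
    (L : Sym2 V → Fin ℓ → C)
    (hLinj : ∀ e ∈ G.edgeSet, Function.Injective (L e))
    (hLα : ∀ e ∈ G.edgeSet, ∀ i, α (L e i) = Λ i) :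
    ∃ ω : Sym2 V → C,
      (∀ e ∈ G.edgeSet, ∃ i, L e i = ω e) ∧
      ∀ (v : V) (c : C),
        ((G.incidenceSet v ∩ {e | ω e = c}).ncard : ℝ) ≤ α c * (G.degree v : ℝ) := by
  obtain ⟨hε0, hε9⟩ := hε
  have hε9' : ε ≤ 0.9 := hε9
  have hℓ0 : 0 < ℓ := by omega
  have hℓ2 : (2:ℝ) ≤ (ℓ:ℝ) := by exact_mod_cast hℓ
  have hℓ0' : (0:ℝ) < (ℓ:ℝ) := by linarith
  -- set of "good" indices
  set good : Finset (Fin ℓ) := Finset.univ.filter (fun i => ε/(2*ℓ) ≤ Λ i) with hgood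
  set W : ℝ := ∑ i ∈ good, Λ i with hWdef
  have hΛnn : ∀ i, (0:ℝ) ≤ Λ i := fun i => (hΛ i).1.le
  have hWle : W ≤ 1 + ε := by
    rw [hWdef, ← hΛsum]
    exact Finset.sum_le_sum_of_subset_of_nonneg (Finset.subset_univ _) (fun i _ _ => hΛnn i)
  have hWge : 1 + ε/2 ≤ W := by
    have hsplit := Finset.sum_filter_add_sum_filter_not Finset.univ
      (fun i => ε/(2*ℓ) ≤ Λ i) Λ
    have hbadle : ∑ i ∈ Finset.univ.filter (fun i => ¬ ε/(2*ℓ) ≤ Λ i), Λ i ≤ ε/2 := by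
      have h1 : ∑ i ∈ Finset.univ.filter (fun i => ¬ ε/(2*ℓ) ≤ Λ i), Λ i
          ≤ (Finset.univ.filter (fun i => ¬ ε/(2*ℓ) ≤ Λ i)).card • (ε/(2*ℓ)) :=
        Finset.sum_le_card_nsmul _ _ _
          (fun i hi => le_of_lt (not_le.1 (Finset.mem_filter.1 hi).2))
      have h2 : ((Finset.univ.filter (fun i => ¬ ε/(2*ℓ) ≤ Λ i)).card : ℝ) ≤ (ℓ:ℝ) := by
        have := Finset.card_filter_le (Finset.univ : Finset (Fin ℓ))
          (fun i => ¬ ε/(2*ℓ) ≤ Λ i)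
        rw [Finset.card_univ, Fintype.card_fin] at this
        exact_mod_cast this
      rw [nsmul_eq_mul] at h1
      have h3 : (0:ℝ) ≤ ε/(2*ℓ) := by positivity
      have h4 : ((Finset.univ.filter (fun i => ¬ ε/(2*ℓ) ≤ Λ i)).card : ℝ) * (ε/(2*ℓ))
          ≤ (ℓ:ℝ) * (ε/(2*ℓ)) := mul_le_mul_of_nonneg_right h2 h3
      have h5 : (ℓ:ℝ) * (ε/(2*ℓ)) = ε/2 := by
        field_simp
      linarith
    rw [hΛsum] at hsplit
    rw [hWdef, hgood]
    linarith
  have hW0 : (0:ℝ) < W := by linarith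
  have hW1 : (1:ℝ) < W := by linarith
  -- capacities
  set cap : V → C → ℝ := fun v c => α c * (G.degree v : ℝ) / W with hcap
  have hcap0 : ∀ v c, 0 ≤ cap v c := by
    intro v c
    rw [hcap]
    have := (hα c).1.le
    positivity
  -- the initial fractional solution
  set x₀ : Sym2 V → Fin ℓ → ℝ := fun _ i => if i ∈ good then Λ i / W else 0 with hx₀
  have h01 : ∀ i ∈ good, 0 < Λ i / W ∧ Λ i / W < 1 := by
    intro i _
    exact ⟨div_pos (hΛ i).1 hW0, (div_lt_one hW0).2 (lt_trans (hΛ i).2 hW1)⟩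
  have hinv₀ : Inv G L good cap x₀ := by
    refine ⟨?_, ?_, ?_, ?_, ?_, ?_⟩
    · intro e _ i
      rw [hx₀]
      dsimp only
      by_cases h : i ∈ good
      · rw [if_pos h]; exact (h01 i h).1.le
      · rw [if_neg h]
    · intro e _ i
      rw [hx₀]
      dsimp only
      by_cases h : i ∈ good
      · rw [if_pos h]; exact (h01 i h).2.le
      · rw [if_neg h]; norm_num
    · intro e _ i hig
      rw [hx₀]
      dsimp only
      rw [if_neg hig]
    · intro e _
      rw [hx₀]
      dsimp only
      rw [Finset.sum_ite_mem, Finset.univ_inter, ← Finset.sum_div, ← hWdef,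
        div_self (ne_of_gt hW0)]
    · intro v c _
      have hinner : ∀ e ∈ G.incidenceFinset v,
          ∑ i, (if L e i = c then x₀ e i else 0) ≤ α c / W := by
        intro e he
        have heS : e ∈ G.edgeSet := SimpleGraph.mem_edgeFinset.1 (inc_subset_edge he)
        have hterm : ∀ i, (if L e i = c then x₀ e i else 0)
            ≤ (if L e i = c then α c / W else 0) := by
          intro i
          by_cases h : L e i = c
          · rw [if_pos h, if_pos h, hx₀]
            dsimp only
            by_cases hg : i ∈ good
            · rw [if_pos hg]
              have : α c = Λ i := by rw [← h, hLα e heS i]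
              rw [this]
            · rw [if_neg hg]
              have := (hα c).1.le
              positivity
          · rw [if_neg h, if_neg h]
        calc ∑ i, (if L e i = c then x₀ e i else 0)
            ≤ ∑ i, (if L e i = c then α c / W else 0) := Finset.sum_le_sum fun i _ => hterm i
          _ = ((Finset.univ.filter (fun i => L e i = c)).card : ℝ) * (α c / W) := by
              rw [← Finset.sum_filter, Finset.sum_const, nsmul_eq_mul]
          _ ≤ 1 * (α c / W) := by
              have hq : (0:ℝ) ≤ α c / W := div_nonneg (hα c).1.le hW0.le
              have hle1 : (Finset.univ.filter (fun i => L e i = c)).card ≤ 1 := by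
                refine Finset.card_le_one.2 fun i hi j hj => ?_
                exact hLinj e heS
                  ((Finset.mem_filter.1 hi).2.trans (Finset.mem_filter.1 hj).2.symm)
              have hle1' : ((Finset.univ.filter (fun i => L e i = c)).card : ℝ) ≤ 1 := by
                exact_mod_cast hle1
              exact mul_le_mul_of_nonneg_right hle1' hq
          _ = α c / W := one_mul _
      calc load G L x₀ v c ≤ ∑ _e ∈ G.incidenceFinset v, α c / W :=
            Finset.sum_le_sum hinner
        _ = (G.degree v : ℝ) * (α c / W) := by
            rw [Finset.sum_const, nsmul_eq_mul, G.card_incidenceFinset_eq_degree]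
        _ = cap v c := by rw [hcap]; ring
    · intro v c
      have hsame : nzcount G L x₀ v c = fccount G L x₀ v c := by
        refine congrArg Finset.card (Finset.filter_congr fun p _ => ?_)
        constructor
        · rintro ⟨hL, hnz⟩
          refine ⟨hL, ?_, ?_⟩
          · exact hnz
          · intro h1
            rw [hx₀] at h1 hnz
            dsimp only at h1 hnz
            by_cases hg : p.2 ∈ good
            · rw [if_pos hg] at h1
              exact absurd h1 (ne_of_lt (h01 p.2 hg).2)
            · rw [if_neg hg] at hnz
              exact hnz rfl
        · rintro ⟨hL, hfr⟩
          exact ⟨hL, hfr.1⟩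
      by_cases h5 : 5 ≤ fccount G L x₀ v c
      · right; exact h5
      · left
        rw [hsame]
        have : (fccount G L x₀ v c : ℝ) ≤ 4 := by exact_mod_cast Nat.lt_succ_iff.1 (not_le.1 h5)
        linarith [hcap0 v c]
  -- run the rounding procedure
  obtain ⟨xf, hinvf, hf0⟩ := round (G := G) (L := L) good cap
    (fracSet G x₀).card x₀ le_rfl hinv₀
  have hint : ∀ e ∈ G.edgeFinset, ∀ i, xf e i = 0 ∨ xf e i = 1 := by
    intro e he i
    by_contra h
    push_neg at h
    have hmem : (e, i) ∈ fracSet G xf := mem_fracSet.2 ⟨he, h.1, h.2⟩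
    rw [Finset.card_eq_zero.1 hf0] at hmem
    exact absurd hmem (Finset.notMem_empty _)
  have hchoose : ∀ e ∈ G.edgeFinset, ∃ i, i ∈ good ∧ xf e i = 1 := by
    intro e he
    have hex : ∃ i, xf e i = 1 := by
      by_contra h
      push_neg at h
      have hz : ∀ i, xf e i = 0 := by
        intro i
        rcases hint e he i with h0 | h1
        · exact h0
        · exact absurd h1 (h i)
      have := hinvf.sum_one e he
      rw [Finset.sum_congr rfl (fun i _ => hz i)] at this
      simp at this
    obtain ⟨i, hi⟩ := hex
    refine ⟨i, ?_, hi⟩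
    by_contra hig
    rw [hinvf.supp e he i hig] at hi
    norm_num at hi
  have hchoose2 : ∀ e : Sym2 V, ∃ i : Fin ℓ, e ∈ G.edgeFinset → i ∈ good ∧ xf e i = 1 := by
    intro e
    by_cases he : e ∈ G.edgeFinset
    · obtain ⟨i, hi⟩ := hchoose e he
      exact ⟨i, fun _ => hi⟩
    · exact ⟨⟨0, hℓ0⟩, fun h => absurd h he⟩
  choose ch hch using hchoose2
  refine ⟨fun e => L e (ch e), ?_, ?_⟩
  · intro e _
    exact ⟨ch e, rfl⟩
  · intro v c
    -- convert the set count to a Finset count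
    have hset : G.incidenceSet v ∩ {e | L e (ch e) = c}
        = ↑((G.incidenceFinset v).filter fun e => L e (ch e) = c) := by
      ext e
      simp [SimpleGraph.mem_incidenceFinset]
    rw [hset, Set.ncard_coe_finset]
    -- identify the count with the final load
    have huniq : ∀ e ∈ G.edgeFinset, ∀ j, j ≠ ch e → xf e j = 0 := by
      intro e he j hj
      have h1 := hinvf.sum_one e he
      have h2 := (hch e he).2
      have h3 : ∑ i ∈ Finset.univ.erase (ch e), xf e i = 0 := by
        have := Finset.add_sum_erase Finset.univ (xf e) (Finset.mem_univ (ch e))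
        rw [h2] at this
        linarith [this, h1]
      have h4 := (Finset.sum_eq_zero_iff_of_nonneg
        (fun i _ => hinvf.nonneg e he i)).1 h3
      exact h4 j (Finset.mem_erase.2 ⟨hj, Finset.mem_univ j⟩)
    have hload_eq : load G L xf v c
        = (((G.incidenceFinset v).filter fun e => L e (ch e) = c).card : ℝ) := by
      rw [load]
      have hterm : ∀ e ∈ G.incidenceFinset v,
          ∑ i, (if L e i = c then xf e i else 0)
            = (if L e (ch e) = c then (1:ℝ) else 0) := by
        intro e he
        have heE := inc_subset_edge he
        calc ∑ i, (if L e i = c then xf e i else 0)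
            = ∑ i, (if i = ch e then (if L e (ch e) = c then (1:ℝ) else 0) else 0) := by
              refine Finset.sum_congr rfl fun i _ => ?_
              by_cases hi : i = ch e
              · subst hi
                rw [if_pos rfl, (hch e heE).2]
              · rw [if_neg hi, huniq e heE i hi]
                simp
          _ = (if L e (ch e) = c then (1:ℝ) else 0) := by
              rw [Finset.sum_ite_eq' Finset.univ (ch e)
                (fun _ => if L e (ch e) = c then (1:ℝ) else 0), if_pos (Finset.mem_univ _)]
      rw [Finset.sum_congr rfl hterm, ← Finset.sum_filter, Finset.sum_const, nsmul_eq_mul,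
        mul_one]
    -- the final load is at most cap + 4
    have hfc0 : fccount G L xf v c = 0 := by
      rw [fccount, Finset.card_eq_zero]
      refine Finset.filter_eq_empty_iff.2 fun p hp => ?_
      rcases Finset.mem_product.1 hp with ⟨hp1, _⟩
      rintro ⟨_, hfr⟩
      rcases hint p.1 (inc_subset_edge hp1) p.2 with h0 | h1
      · exact hfr.1 h0
      · exact hfr.2 h1
    have hDfin : (nzcount G L xf v c : ℝ) ≤ cap v c + 4 := by
      rcases hinvf.hD v c with h | h
      · exact h
      · rw [hfc0] at h; omega
    have hload_le : load G L xf v c ≤ cap v c + 4 :=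
      le_trans (load_le_nzcount v c hinvf.le_one) hDfin
    rw [← hload_eq]
    -- case analysis on whether the colour is used at v
    rcases Finset.eq_empty_or_nonempty
      ((G.incidenceFinset v).filter fun e => L e (ch e) = c) with hemp | ⟨e, hef⟩
    · rw [hload_eq, hemp]
      simp only [Finset.card_empty, Nat.cast_zero]
      have := (hα c).1.le
      positivity
    · -- the colour is good, so its tolerance is not too small
      rcases Finset.mem_filter.1 hef with ⟨hei, hec⟩
      have heE := inc_subset_edge hei
      have heS : e ∈ G.edgeSet := SimpleGraph.mem_edgeFinset.1 heE
      have hαgood : ε/(2*ℓ) ≤ α c := by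
        have h1 : α (L e (ch e)) = Λ (ch e) := hLα e heS (ch e)
        rw [hec] at h1
        have h2 := (hch e heE).1
        rw [hgood] at h2
        rw [h1]
        exact (Finset.mem_filter.1 h2).2
      -- final arithmetic
      set d : ℝ := (G.degree v : ℝ) with hd
      have hd0 : (0:ℝ) ≤ d := Nat.cast_nonneg _
      have hdge : (109:ℝ) * ℓ * (ε^2)⁻¹ * Real.log (ℓ * ε⁻¹) ≤ d := by
        refine le_trans (Nat.le_ceil _) ?_
        rw [hd]
        exact_mod_cast hδ v
      have hlg : (0.69:ℝ) ≤ Real.log (ℓ * ε⁻¹) := by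
        have hinv1 : (1:ℝ) ≤ ε⁻¹ := by
          rw [le_inv_comm₀]
          · linarith
          · norm_num
          · exact hε0
        have h2le : (2:ℝ) ≤ (ℓ:ℝ) * ε⁻¹ := by nlinarith
        calc (0.69:ℝ) ≤ Real.log 2 := by linarith [Real.log_two_gt_d9]
          _ ≤ Real.log ((ℓ:ℝ) * ε⁻¹) := Real.log_le_log (by norm_num) h2le
      set A : ℝ := α c * d with hA
      have hA37 : 37 / ε ≤ A := by
        have step2 : (ε/(2*ℓ)) * ((109:ℝ) * ℓ * (ε^2)⁻¹ * Real.log (ℓ * ε⁻¹))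
            ≤ (ε/(2*ℓ)) * d := mul_le_mul_of_nonneg_left hdge (by positivity)
        have step1 : (ε/(2*ℓ)) * d ≤ A := by
          rw [hA]
          exact mul_le_mul_of_nonneg_right hαgood hd0
        have step3 : 37 / ε ≤ (ε/(2*ℓ)) * ((109:ℝ) * ℓ * (ε^2)⁻¹ * Real.log (ℓ * ε⁻¹)) := by
          have heq : (ε/(2*ℓ)) * ((109:ℝ) * ℓ * (ε^2)⁻¹ * Real.log (ℓ * ε⁻¹))
              = 109 * Real.log (ℓ * ε⁻¹) / (2*ε) := by
            field_simp
          rw [heq, div_le_div_iff₀ hε0 (by positivity)]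
          nlinarith
        linarith
      have hA0 : 0 < A := lt_of_lt_of_le (by positivity) hA37
      have hcapA : cap v c = A / W := by rw [hcap, hA, hd]
      have hfinal : A / W + 4 ≤ A := by
        have hB : (0:ℝ) < 1 + ε/2 := by linarith
        set q : ℝ := A / (1 + ε/2) with hqdef
        have hq : A / W ≤ q := div_le_div_of_nonneg_left hA0.le hB hWge
        have hAε : 37 ≤ A * ε := (div_le_iff₀ hε0).1 hA37
        have hqA : q * (1 + ε/2) = A := div_mul_cancel₀ _ (ne_of_gt hB)
        have hq0 : 0 ≤ q := by positivity
        have hqe : 0 ≤ q * ε := mul_nonneg hq0 hε0.le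
        have h1 : A * ε = q * ε + q * ε * (ε/2) := by rw [← hqA]; ring
        have h2 : q * ε * (ε/2) ≤ q * ε * 0.45 :=
          mul_le_mul_of_nonneg_left (by linarith) hqe
        have h3 : 8 ≤ q * ε := by linarith
        have hA_eq : A = q + (q * ε) / 2 := by rw [← hqA]; ring
        linarith
      calc load G L xf v c ≤ cap v c + 4 := hload_le
        _ = A / W + 4 := by rw [hcapA]
        _ ≤ A := hfinal
        _ = α c * d := hA
end

section
/- Let k ≥ 2 be an integer and let G be a finite simple d-regular graph with d ≥ k² − k such that ⌊d/k⌋ is even. Then for every list assignment L assigning to each edge a list of k+1 colours, G admits an L-colouring that is a 1/k-majority edge colouring. -/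
open Finset

lemma hall_subset {ι α : Type*} [DecidableEq ι] [DecidableEq α]
    (s : Finset ι) (t : ι → Finset α)
    (h : ∀ s' ⊆ s, s'.card ≤ (s'.biUnion t).card) :
    ∃ f : {x // x ∈ s} → α, Function.Injective f ∧ ∀ x, f x ∈ t x.val := by
  classical
  have key := (Finset.all_card_le_biUnion_card_iff_exists_injective
    (fun x : {x // x ∈ s} => t x.val)).mp ?_
  · exact key
  · intro s'
    have h1 : (s'.image Subtype.val).card = s'.card := Finset.card_image_of_injective _ Subtype.val_injective
    have h2 : (s'.image Subtype.val) ⊆ s := by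
      intro x hx
      obtain ⟨y, _, rfl⟩ := Finset.mem_image.mp hx
      exact y.property
    have h3 := h _ h2
    rw [h1] at h3
    refine h3.trans (Finset.card_le_card ?_)
    intro a ha
    rw [Finset.mem_biUnion] at ha ⊢
    obtain ⟨x, hx, hax⟩ := ha
    obtain ⟨y, hy, rfl⟩ := Finset.mem_image.mp hx
    exact ⟨y, hy, hax⟩

/-- König edge colouring for regular bipartite fiber-multigraphs. -/
lemma koenig_regular {ε X Y : Type*} [DecidableEq ε] [DecidableEq X] [DecidableEq Y] :
    ∀ (r : ℕ) (E : Finset ε) (x : ε → X) (y : ε → Y),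
    (∀ v ∈ E.image x, (E.filter (fun e => x e = v)).card = r) →
    (∀ w ∈ E.image y, (E.filter (fun e => y e = w)).card = r) →
    ∃ φ : ε → ℕ, (∀ e ∈ E, φ e < r) ∧
      (∀ e ∈ E, ∀ f ∈ E, e ≠ f → (x e = x f ∨ y e = y f) → φ e ≠ φ f) := by
  classical
  intro r
  induction r with
  | zero =>
    intro E x y hx _
    refine ⟨fun _ => 0, ?_, ?_⟩
    · intro e he
      have := hx (x e) (Finset.mem_image_of_mem x he)
      have he' : e ∈ E.filter (fun f => x f = x e) := by simp [he]
      rw [Finset.card_eq_zero] at this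
      rw [this] at he'
      exact absurd he' (Finset.notMem_empty e)
    · intro e he
      have := hx (x e) (Finset.mem_image_of_mem x he)
      have he' : e ∈ E.filter (fun f => x f = x e) := by simp [he]
      rw [Finset.card_eq_zero] at this
      rw [this] at he'
      exact absurd he' (Finset.notMem_empty e)
  | succ r ih =>
    intro E x y hx hy
    set A := E.image x with hA
    set B := E.image y with hB
    set t : X → Finset Y := fun v => (E.filter (fun e => x e = v)).image y with ht
    -- the fiberwise card sums
    have cardA : E.card = (r+1) * A.card := by
      rw [Finset.card_eq_sum_card_fiberwise (fun e he => Finset.mem_image_of_mem x he)]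
      rw [Finset.sum_congr rfl (fun v hv => hx v hv), Finset.sum_const, smul_eq_mul, mul_comm]
    have cardB : E.card = (r+1) * B.card := by
      rw [Finset.card_eq_sum_card_fiberwise (fun e he => Finset.mem_image_of_mem y he)]
      rw [Finset.sum_congr rfl (fun w hw => hy w hw), Finset.sum_const, smul_eq_mul, mul_comm]
    -- Hall condition
    have hall : ∀ S ⊆ A, S.card ≤ (S.biUnion t).card := by
      intro S hS
      set T := S.biUnion t with hT
      have hTB : T ⊆ B := by
        intro w hw
        rw [Finset.mem_biUnion] at hw
        obtain ⟨v, _, hw⟩ := hw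
        obtain ⟨e, he, rfl⟩ := Finset.mem_image.mp hw
        exact Finset.mem_image_of_mem y (Finset.mem_filter.mp he).1
      have h1 : (E.filter (fun e => x e ∈ S)).card = (r+1) * S.card := by
        rw [Finset.card_eq_sum_card_fiberwise (f := x) (s := E.filter (fun e => x e ∈ S)) (t := S)
          (fun e he => (Finset.mem_filter.mp he).2)]
        have : ∀ v ∈ S, ((E.filter (fun e => x e ∈ S)).filter (fun e => x e = v)).card = r + 1 := by
          intro v hv
          rw [Finset.filter_filter]
          have : (E.filter fun e => x e ∈ S ∧ x e = v) = E.filter (fun e => x e = v) := by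
            ext e
            simp only [Finset.mem_filter]
            exact ⟨fun ⟨h1, h2⟩ => ⟨h1, h2.2⟩, fun ⟨h1, h2⟩ => ⟨h1, h2 ▸ hv, h2⟩⟩
          rw [this]
          exact hx v (hS hv)
        rw [Finset.sum_congr rfl this, Finset.sum_const, smul_eq_mul, mul_comm]
      have h2 : E.filter (fun e => x e ∈ S) ⊆ E.filter (fun e => y e ∈ T) := by
        intro e he
        rw [Finset.mem_filter] at he ⊢
        refine ⟨he.1, Finset.mem_biUnion.mpr ⟨x e, he.2, ?_⟩⟩
        exact Finset.mem_image_of_mem y (Finset.mem_filter.mpr ⟨he.1, rfl⟩)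
      have h3 : (E.filter (fun e => y e ∈ T)).card ≤ (r+1) * T.card := by
        rw [Finset.card_eq_sum_card_fiberwise (f := y) (s := E.filter (fun e => y e ∈ T)) (t := T)
          (fun e he => (Finset.mem_filter.mp he).2)]
        have : ∀ w ∈ T, ((E.filter (fun e => y e ∈ T)).filter (fun e => y e = w)).card ≤ r + 1 := by
          intro w hw
          rw [Finset.filter_filter]
          refine le_trans (Finset.card_le_card ?_) (le_of_eq (hy w (hTB hw)))
          intro e he
          rw [Finset.mem_filter] at he ⊢
          exact ⟨he.1, he.2.2⟩
        calc ∑ w ∈ T, ((E.filter (fun e => y e ∈ T)).filter (fun e => y e = w)).card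
            ≤ ∑ w ∈ T, (r+1) := Finset.sum_le_sum this
          _ = (r+1) * T.card := by rw [Finset.sum_const, smul_eq_mul, mul_comm]
      have := (h1 ▸ (Finset.card_le_card h2)).trans h3
      exact Nat.le_of_mul_le_mul_left (by linarith [this]) (Nat.succ_pos r)
    obtain ⟨f, hfinj, hft⟩ := hall_subset A t hall
    -- choose an edge for each vertex of A
    have hch : ∀ v : {v // v ∈ A}, ∃ e, e ∈ E ∧ x e = v.val ∧ y e = f v := by
      intro v
      have := hft v
      rw [ht] at this
      obtain ⟨e, he, hye⟩ := Finset.mem_image.mp this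
      rw [Finset.mem_filter] at he
      exact ⟨e, he.1, he.2, hye⟩
    set g : {v // v ∈ A} → ε := fun v => Classical.choose (hch v) with hg
    have hgE : ∀ v, g v ∈ E := fun v => (Classical.choose_spec (hch v)).1
    have hgx : ∀ v, x (g v) = v.val := fun v => (Classical.choose_spec (hch v)).2.1
    have hgy : ∀ v, y (g v) = f v := fun v => (Classical.choose_spec (hch v)).2.2
    have hginj : Function.Injective g := by
      intro u v huv
      have : u.val = v.val := by rw [← hgx u, ← hgx v, huv]
      exact Subtype.ext this
    set M : Finset ε := A.attach.image g with hM
    have hME : M ⊆ E := by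
      intro e he
      obtain ⟨v, _, rfl⟩ := Finset.mem_image.mp he
      exact hgE v
    -- membership characterization of M
    have memM : ∀ e, e ∈ M ↔ ∃ v, g v = e := by
      intro e
      rw [hM]
      constructor
      · intro he
        obtain ⟨v, _, rfl⟩ := Finset.mem_image.mp he
        exact ⟨v, rfl⟩
      · rintro ⟨v, rfl⟩
        exact Finset.mem_image_of_mem g (Finset.mem_attach _ v)
    -- x fibers of E \ M
    have fibx' : ∀ v ∈ (E \ M).image x, ((E \ M).filter (fun e => x e = v)).card = r := by
      intro v hv
      obtain ⟨e0, he0, rfl⟩ := Finset.mem_image.mp hv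
      have he0E : e0 ∈ E := (Finset.mem_sdiff.mp he0).1
      have hvA : x e0 ∈ A := Finset.mem_image_of_mem x he0E
      have key : (E \ M).filter (fun e => x e = x e0)
          = (E.filter (fun e => x e = x e0)).erase (g ⟨x e0, hvA⟩) := by
        ext e
        rw [Finset.mem_filter, Finset.mem_sdiff, Finset.mem_erase, Finset.mem_filter]
        constructor
        · rintro ⟨⟨heE, heM⟩, hxe⟩
          refine ⟨?_, heE, hxe⟩
          rintro rfl
          exact heM ((memM _).mpr ⟨_, rfl⟩)
        · rintro ⟨hne, heE, hxe⟩
          refine ⟨⟨heE, ?_⟩, hxe⟩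
          intro heM
          obtain ⟨u, rfl⟩ := (memM _).mp heM
          have : u = ⟨x e0, hvA⟩ := Subtype.ext (by rw [← hgx u]; exact hxe)
          exact hne (by rw [this])
      have hmem : g ⟨x e0, hvA⟩ ∈ E.filter (fun e => x e = x e0) :=
        Finset.mem_filter.mpr ⟨hgE ⟨x e0, hvA⟩, hgx ⟨x e0, hvA⟩⟩
      rw [key, Finset.card_erase_of_mem hmem, hx _ hvA]; rfl
    -- f is surjective onto B
    have hAB : A.card = B.card := by
      have := cardA.symm.trans cardB
      exact Nat.eq_of_mul_eq_mul_left (Nat.succ_pos r) this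
    have himgf : A.attach.image (fun v => f v) = B := by
      apply Finset.eq_of_subset_of_card_le
      · intro w hw
        obtain ⟨v, _, rfl⟩ := Finset.mem_image.mp hw
        have := hft v
        rw [ht] at this
        obtain ⟨e, he, hye⟩ := Finset.mem_image.mp this
        rw [← hye]
        exact Finset.mem_image_of_mem y (Finset.mem_filter.mp he).1
      · rw [Finset.card_image_of_injective _ hfinj, Finset.card_attach, hAB]
    -- y fibers of E \ M
    have fiby' : ∀ w ∈ (E \ M).image y, ((E \ M).filter (fun e => y e = w)).card = r := by
      intro w hw
      obtain ⟨e0, he0, rfl⟩ := Finset.mem_image.mp hw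
      have he0E : e0 ∈ E := (Finset.mem_sdiff.mp he0).1
      have hwB : y e0 ∈ B := Finset.mem_image_of_mem y he0E
      obtain ⟨u, _, hu⟩ := Finset.mem_image.mp (himgf ▸ hwB : y e0 ∈ A.attach.image (fun v => f v))
      have key : (E \ M).filter (fun e => y e = y e0)
          = (E.filter (fun e => y e = y e0)).erase (g u) := by
        ext e
        rw [Finset.mem_filter, Finset.mem_sdiff, Finset.mem_erase, Finset.mem_filter]
        constructor
        · rintro ⟨⟨heE, heM⟩, hye⟩
          refine ⟨?_, heE, hye⟩
          rintro rfl
          exact heM ((memM _).mpr ⟨_, rfl⟩)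
        · rintro ⟨hne, heE, hye⟩
          refine ⟨⟨heE, ?_⟩, hye⟩
          intro heM
          obtain ⟨u', rfl⟩ := (memM _).mp heM
          have : f u' = f u := by rw [← hgy u']; rw [hye, hu]
          exact hne (by rw [hfinj this])
      have hmem : g u ∈ E.filter (fun e => y e = y e0) :=
        Finset.mem_filter.mpr ⟨hgE u, by rw [hgy u, hu]⟩
      rw [key, Finset.card_erase_of_mem hmem, hy _ hwB]; rfl
    obtain ⟨φ', hφ'lt, hφ'proper⟩ := ih (E \ M) x y fibx' fiby'
    refine ⟨fun e => if e ∈ M then r else φ' e, ?_, ?_⟩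
    · intro e he
      by_cases heM : e ∈ M
      · simp [heM]
      · simp only [heM, if_false]
        exact lt_trans (hφ'lt e (Finset.mem_sdiff.mpr ⟨he, heM⟩)) (Nat.lt_succ_self r)
    · intro e he f' hf' hne hadj
      by_cases heM : e ∈ M <;> by_cases hfM : f' ∈ M
      · exfalso
        obtain ⟨u, rfl⟩ := (memM _).mp heM
        obtain ⟨u', rfl⟩ := (memM _).mp hfM
        rcases hadj with h | h
        · rw [hgx, hgx] at h
          exact hne (congrArg g (Subtype.ext h))
        · rw [hgy, hgy] at h
          exact hne (congrArg g (hfinj h))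
      · simp only [heM, hfM, if_true, if_false]
        exact (Nat.ne_of_lt (hφ'lt f' (Finset.mem_sdiff.mpr ⟨hf', hfM⟩))).symm
      · simp only [heM, hfM, if_true, if_false]
        exact Nat.ne_of_lt (hφ'lt e (Finset.mem_sdiff.mpr ⟨he, heM⟩))
      · simp only [heM, hfM, if_false]
        exact hφ'proper e (Finset.mem_sdiff.mpr ⟨he, heM⟩) f' (Finset.mem_sdiff.mpr ⟨hf', hfM⟩) hne hadj

def cnt {α : Type*} [DecidableEq α] (a : α) (l : List α) : ℕ :=
  (l.map (fun x => if x = a then 1 else 0)).sum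

lemma cnt_nil {α : Type*} [DecidableEq α] (a : α) : cnt a ([] : List α) = 0 := rfl

lemma cnt_cons {α : Type*} [DecidableEq α] (a h : α) (t : List α) :
    cnt a (h :: t) = cnt a t + if h = a then 1 else 0 := by
  simp only [cnt, List.map_cons, List.sum_cons]
  omega

lemma cnt_append {α : Type*} [DecidableEq α] (a : α) (l₁ l₂ : List α) :
    cnt a (l₁ ++ l₂) = cnt a l₁ + cnt a l₂ := by
  simp [cnt]

lemma cnt_replicate {α : Type*} [DecidableEq α] (a b : α) (m : ℕ) :
    cnt a (List.replicate m b) = if b = a then m else 0 := by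
  induction m with
  | zero => simp [cnt]
  | succ m ih =>
    rw [List.replicate_succ, cnt_cons, ih]
    by_cases hb : b = a <;> simp [hb]

lemma count_getD {α : Type*} [DecidableEq α] (l : List α) (j a : α) :
    ((Finset.range l.length).filter (fun i => l.getD i j = a)).card = cnt a l := by
  induction l with
  | nil => simp [cnt]
  | cons h t ih =>
    rw [List.length_cons, Finset.card_filter, Finset.sum_range_succ']
    simp only [List.getD_cons_succ, List.getD_cons_zero]
    rw [← Finset.card_filter, ih, cnt_cons]

lemma list_sum_map_finset {α : Type*} (s : Finset α) (f : α → ℕ) :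
    (s.toList.map f).sum = ∑ v ∈ s, f v := by
  have h : ((s.toList.map f : List ℕ) : Multiset ℕ) = Multiset.map f s.val := by
    rw [← Multiset.map_coe, Finset.coe_toList]
  rw [Finset.sum, ← h, Multiset.sum_coe]

lemma lenflat {γ δ : Type*} (l : List γ) (g : γ → ℕ) (el : γ → δ) :
    (l.flatMap fun v => List.replicate (g v) (el v)).length = (l.map g).sum := by
  rw [List.length_flatMap]
  congr 1
  simp [Function.comp_def]

lemma countflat {γ : Type*} [DecidableEq γ] (l : List γ) (g : γ → ℕ) (a : γ)
    (hnd : l.Nodup) :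
    (l.flatMap fun v => List.replicate (g v) v).count a = if a ∈ l then g a else 0 := by
  rw [List.count_flatMap]
  induction l with
  | nil => simp
  | cons h t ih =>
    simp only [List.map_cons, List.sum_cons, List.mem_cons]
    rw [ih (List.Nodup.of_cons hnd)]
    simp only [Function.comp_apply, List.count_replicate]
    by_cases hah : h = a
    · subst hah
      have hna : h ∉ t := (List.nodup_cons.mp hnd).1
      simp [hna]
    · by_cases hat : a ∈ t <;> simp [hah, hat, Ne.symm hah]

lemma countflat2 {γ δ : Type*} [DecidableEq γ] [DecidableEq δ] (l : List γ) (g : γ → ℕ)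
    (el : γ → δ) (hel : Function.Injective el) (hnd : l.Nodup) (u : γ) :
    cnt (el u) (l.flatMap fun v => List.replicate (g v) (el v)) = if u ∈ l then g u else 0 := by
  induction l with
  | nil => simp [cnt]
  | cons h t ih =>
    rw [List.flatMap_cons, cnt_append, ih (List.Nodup.of_cons hnd), cnt_replicate]
    by_cases hah : h = u
    · subst hah
      have hna : h ∉ t := (List.nodup_cons.mp hnd).1
      simp [hna]
    · have h2 : ¬ (el h = el u) := fun hc => hah (hel hc)
      by_cases hat : u ∈ t <;> simp [hah, hat, h2, Ne.symm hah]

lemma countflat0 {γ δ : Type*} [DecidableEq γ] [DecidableEq δ] (l : List γ) (g : γ → ℕ)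
    (el : γ → δ) (a : δ) (ha : ∀ v ∈ l, el v ≠ a) :
    cnt a (l.flatMap fun v => List.replicate (g v) (el v)) = 0 := by
  induction l with
  | nil => simp [cnt]
  | cons h t ih =>
    rw [List.flatMap_cons, cnt_append, ih (fun v hv => ha v (List.mem_cons_of_mem h hv)),
      cnt_replicate]
    simp [ha h List.mem_cons_self]

/-- König edge colouring for bipartite fiber-multigraphs with degrees at most `n`. -/
lemma koenig {ε X Y : Type*} [DecidableEq ε] [DecidableEq X] [DecidableEq Y]
    (E : Finset ε) (x : ε → X) (y : ε → Y) (n : ℕ)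
    (hx : ∀ v, (E.filter (fun e => x e = v)).card ≤ n)
    (hy : ∀ w, (E.filter (fun e => y e = w)).card ≤ n) :
    ∃ φ : ε → ℕ, (∀ e ∈ E, φ e < n) ∧
      (∀ e ∈ E, ∀ f ∈ E, e ≠ f → (x e = x f ∨ y e = y f) → φ e ≠ φ f) := by
  classical
  set A := E.image x with hA
  set B := E.image y with hB
  set fx : X → ℕ := fun v => (E.filter (fun e => x e = v)).card with hfx
  set fy : Y → ℕ := fun w => (E.filter (fun e => y e = w)).card with hfy
  set lx : List (X ⊕ ℕ) :=
    (A.toList.flatMap fun v => List.replicate (n - fx v) (Sum.inl v)) ++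
      ((List.range B.card).flatMap fun i => List.replicate n (Sum.inr i)) with hlx
  set ly : List (Y ⊕ ℕ) :=
    (B.toList.flatMap fun w => List.replicate (n - fy w) (Sum.inl w)) ++
      ((List.range A.card).flatMap fun i => List.replicate n (Sum.inr i)) with hly
  have sumfx : ∑ v ∈ A, fx v = E.card :=
    (Finset.card_eq_sum_card_fiberwise (fun e he => Finset.mem_image_of_mem x he)).symm
  have sumfy : ∑ w ∈ B, fy w = E.card :=
    (Finset.card_eq_sum_card_fiberwise (fun e he => Finset.mem_image_of_mem y he)).symm
  have hlxlen : lx.length + E.card = n * A.card + n * B.card := by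
    rw [hlx, List.length_append, lenflat, lenflat]
    rw [list_sum_map_finset A (fun v => n - fx v)]
    have h1 : ∑ v ∈ A, (n - fx v) + E.card = n * A.card := by
      rw [← sumfx, ← Finset.sum_add_distrib]
      rw [Finset.sum_congr rfl (fun v _ => Nat.sub_add_cancel (hx v))]
      rw [Finset.sum_const, smul_eq_mul, mul_comm]
    have h2 : ((List.range B.card).map (fun _ => n)).sum = n * B.card := by
      rw [List.map_const', List.sum_replicate, smul_eq_mul, List.length_range, mul_comm]
    omega
  have hlylen : ly.length + E.card = n * B.card + n * A.card := by
    rw [hly, List.length_append, lenflat, lenflat]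
    rw [list_sum_map_finset B (fun w => n - fy w)]
    have h1 : ∑ w ∈ B, (n - fy w) + E.card = n * B.card := by
      rw [← sumfy, ← Finset.sum_add_distrib]
      rw [Finset.sum_congr rfl (fun w _ => Nat.sub_add_cancel (hy w))]
      rw [Finset.sum_const, smul_eq_mul, mul_comm]
    have h2 : ((List.range A.card).map (fun _ => n)).sum = n * A.card := by
      rw [List.map_const', List.sum_replicate, smul_eq_mul, List.length_range, mul_comm]
    omega
  have hD : ly.length = lx.length := by omega
  -- counts in lx and ly
  have countlxA : ∀ v : X, cnt (Sum.inl v : X ⊕ ℕ) lx = if v ∈ A then n - fx v else 0 := by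
    intro v
    have h1 : cnt (Sum.inl v : X ⊕ ℕ)
        (A.toList.flatMap fun u => List.replicate (n - fx u) (Sum.inl u : X ⊕ ℕ))
        = if v ∈ A.toList then n - fx v else 0 :=
      countflat2 A.toList (fun u => n - fx u) (Sum.inl : X → X ⊕ ℕ)
        Sum.inl_injective A.nodup_toList v
    have h2 : cnt (Sum.inl v : X ⊕ ℕ) ((List.range B.card).flatMap fun i =>
        List.replicate n (Sum.inr i : X ⊕ ℕ)) = 0 :=
      countflat0 (List.range B.card) (fun _ => n) (Sum.inr : ℕ → X ⊕ ℕ)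
        (Sum.inl v) (fun i _ => by simp)
    rw [hlx, cnt_append, h1, h2]
    simp [Finset.mem_toList]
  have countlxB : ∀ i : ℕ, cnt (Sum.inr i : X ⊕ ℕ) lx = if i < B.card then n else 0 := by
    intro i
    have h1 : cnt (Sum.inr i : X ⊕ ℕ)
        (A.toList.flatMap fun u => List.replicate (n - fx u) (Sum.inl u : X ⊕ ℕ)) = 0 :=
      countflat0 A.toList (fun u => n - fx u) (Sum.inl : X → X ⊕ ℕ)
        (Sum.inr i) (fun u _ => by simp)
    have h2 : cnt (Sum.inr i : X ⊕ ℕ) ((List.range B.card).flatMap fun j =>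
        List.replicate n (Sum.inr j : X ⊕ ℕ))
        = if i ∈ List.range B.card then n else 0 :=
      countflat2 (List.range B.card) (fun _ => n) (Sum.inr : ℕ → X ⊕ ℕ)
        Sum.inr_injective List.nodup_range i
    rw [hlx, cnt_append, h1, h2]
    simp
  have countlyA : ∀ w : Y, cnt (Sum.inl w : Y ⊕ ℕ) ly = if w ∈ B then n - fy w else 0 := by
    intro w
    have h1 : cnt (Sum.inl w : Y ⊕ ℕ)
        (B.toList.flatMap fun u => List.replicate (n - fy u) (Sum.inl u : Y ⊕ ℕ))
        = if w ∈ B.toList then n - fy w else 0 :=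
      countflat2 B.toList (fun u => n - fy u) (Sum.inl : Y → Y ⊕ ℕ)
        Sum.inl_injective B.nodup_toList w
    have h2 : cnt (Sum.inl w : Y ⊕ ℕ) ((List.range A.card).flatMap fun i =>
        List.replicate n (Sum.inr i : Y ⊕ ℕ)) = 0 :=
      countflat0 (List.range A.card) (fun _ => n) (Sum.inr : ℕ → Y ⊕ ℕ)
        (Sum.inl w) (fun i _ => by simp)
    rw [hly, cnt_append, h1, h2]
    simp [Finset.mem_toList]
  have countlyB : ∀ i : ℕ, cnt (Sum.inr i : Y ⊕ ℕ) ly = if i < A.card then n else 0 := by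
    intro i
    have h1 : cnt (Sum.inr i : Y ⊕ ℕ)
        (B.toList.flatMap fun u => List.replicate (n - fy u) (Sum.inl u : Y ⊕ ℕ)) = 0 :=
      countflat0 B.toList (fun u => n - fy u) (Sum.inl : Y → Y ⊕ ℕ)
        (Sum.inr i) (fun u _ => by simp)
    have h2 : cnt (Sum.inr i : Y ⊕ ℕ) ((List.range A.card).flatMap fun j =>
        List.replicate n (Sum.inr j : Y ⊕ ℕ))
        = if i ∈ List.range A.card then n else 0 :=
      countflat2 (List.range A.card) (fun _ => n) (Sum.inr : ℕ → Y ⊕ ℕ)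
        Sum.inr_injective List.nodup_range i
    rw [hly, cnt_append, h1, h2]
    simp
  -- the padded instance
  set E' : Finset (ε ⊕ ℕ) := E.image Sum.inl ∪ (Finset.range lx.length).image Sum.inr with hE'
  set x' : ε ⊕ ℕ → X ⊕ ℕ :=
    Sum.elim (fun e => Sum.inl (x e)) (fun i => lx.getD i (Sum.inr 0)) with hx'def
  set y' : ε ⊕ ℕ → Y ⊕ ℕ :=
    Sum.elim (fun e => Sum.inl (y e)) (fun i => ly.getD i (Sum.inr 0)) with hy'def
  have hdisj : Disjoint (E.image Sum.inl) ((Finset.range lx.length).image Sum.inr) := by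
    rw [Finset.disjoint_left]
    intro e' he1 he2
    obtain ⟨e, _, rfl⟩ := Finset.mem_image.mp he1
    obtain ⟨i, _, h⟩ := Finset.mem_image.mp he2
    cases h
  have fibcardx : ∀ v' : X ⊕ ℕ, (E'.filter (fun e' => x' e' = v')).card
      = (E.filter (fun e => (Sum.inl (x e) : X ⊕ ℕ) = v')).card + cnt v' lx := by
    intro v'
    rw [hE', Finset.filter_union,
      Finset.card_union_of_disjoint (Finset.disjoint_filter_filter hdisj)]
    congr 1
    · rw [Finset.filter_image, Finset.card_image_of_injective _ Sum.inl_injective]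
      rfl
    · rw [Finset.filter_image, Finset.card_image_of_injective _ Sum.inr_injective]
      exact count_getD lx (Sum.inr 0) v'
  have fibcardy : ∀ w' : Y ⊕ ℕ, (E'.filter (fun e' => y' e' = w')).card
      = (E.filter (fun e => (Sum.inl (y e) : Y ⊕ ℕ) = w')).card + cnt w' ly := by
    intro w'
    rw [hE', Finset.filter_union,
      Finset.card_union_of_disjoint (Finset.disjoint_filter_filter hdisj)]
    congr 1
    · rw [Finset.filter_image, Finset.card_image_of_injective _ Sum.inl_injective]
      rfl
    · rw [Finset.filter_image, Finset.card_image_of_injective _ Sum.inr_injective]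
      have h2 : ((Finset.range ly.length).filter
          (fun i => ly.getD i (Sum.inr 0) = w')).card = cnt w' ly :=
        count_getD ly (Sum.inr 0) w'
      rw [hD] at h2
      exact h2
  have regx : ∀ v' ∈ E'.image x', (E'.filter (fun e' => x' e' = v')).card = n := by
    intro v' hv'
    obtain ⟨e', he', hxe'⟩ := Finset.mem_image.mp hv'
    rw [fibcardx v']
    match v' with
    | Sum.inl v =>
      have h1 : (E.filter (fun e => (Sum.inl (x e) : X ⊕ ℕ) = Sum.inl v)).card = fx v := by
        rw [hfx]; congr 1; ext e; simp
      have hvA : v ∈ A := by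
        rcases e' with e | i
        · have heE : e ∈ E := by
            rcases Finset.mem_union.mp he' with h | h
            · obtain ⟨e0, he0, h0⟩ := Finset.mem_image.mp h
              cases h0; exact he0
            · obtain ⟨i, _, hi⟩ := Finset.mem_image.mp h
              cases hi
          simp only [hx'def, Sum.elim_inl, Sum.inl.injEq] at hxe'
          exact hxe' ▸ Finset.mem_image_of_mem x heE
        · by_contra hvA
          have hc := countlxA v
          rw [if_neg hvA] at hc
          have hi : i ∈ Finset.range lx.length := by
            rcases Finset.mem_union.mp he' with h | h
            · obtain ⟨e0, _, h0⟩ := Finset.mem_image.mp h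
              cases h0
            · obtain ⟨j, hj, h0⟩ := Finset.mem_image.mp h
              cases h0; exact hj
          have hmem : i ∈ (Finset.range lx.length).filter
              (fun i => lx.getD i (Sum.inr 0) = Sum.inl v) := by
            refine Finset.mem_filter.mpr ⟨hi, ?_⟩
            simpa [hx'def] using hxe'
          have hpos := Finset.card_pos.mpr ⟨i, hmem⟩
          have hcg : ((Finset.range lx.length).filter
              (fun i => lx.getD i (Sum.inr 0) = Sum.inl v)).card = cnt (Sum.inl v : X ⊕ ℕ) lx :=
            count_getD lx (Sum.inr 0) (Sum.inl v)
          rw [hcg, hc] at hpos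
          exact absurd hpos (lt_irrefl 0)
      rw [h1, countlxA v, if_pos hvA]
      have h2 : fx v ≤ n := hx v
      omega
    | Sum.inr i =>
      have h1 : (E.filter (fun e => (Sum.inl (x e) : X ⊕ ℕ) = Sum.inr i)).card = 0 := by
        rw [Finset.card_eq_zero, Finset.filter_eq_empty_iff]
        intro e _
        simp
      have hib : i < B.card := by
        by_contra hib
        have hc := countlxB i
        rw [if_neg hib] at hc
        rcases e' with e | j
        · simp [hx'def] at hxe'
        · have hj : j ∈ Finset.range lx.length := by
            rcases Finset.mem_union.mp he' with h | h
            · obtain ⟨e0, _, h0⟩ := Finset.mem_image.mp h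
              cases h0
            · obtain ⟨j', hj', h0⟩ := Finset.mem_image.mp h
              cases h0; exact hj'
          have hmem : j ∈ (Finset.range lx.length).filter
              (fun j => lx.getD j (Sum.inr 0) = Sum.inr i) := by
            refine Finset.mem_filter.mpr ⟨hj, ?_⟩
            simpa [hx'def] using hxe'
          have hpos := Finset.card_pos.mpr ⟨j, hmem⟩
          have hcg : ((Finset.range lx.length).filter
              (fun j => lx.getD j (Sum.inr 0) = Sum.inr i)).card = cnt (Sum.inr i : X ⊕ ℕ) lx :=
            count_getD lx (Sum.inr 0) (Sum.inr i)
          rw [hcg, hc] at hpos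
          exact absurd hpos (lt_irrefl 0)
      rw [h1, countlxB i, if_pos hib]
      omega
  have regy : ∀ w' ∈ E'.image y', (E'.filter (fun e' => y' e' = w')).card = n := by
    intro w' hw'
    obtain ⟨e', he', hye'⟩ := Finset.mem_image.mp hw'
    rw [fibcardy w']
    match w' with
    | Sum.inl w =>
      have h1 : (E.filter (fun e => (Sum.inl (y e) : Y ⊕ ℕ) = Sum.inl w)).card = fy w := by
        rw [hfy]; congr 1; ext e; simp
      have hwB : w ∈ B := by
        rcases e' with e | i
        · have heE : e ∈ E := by
            rcases Finset.mem_union.mp he' with h | h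
            · obtain ⟨e0, he0, h0⟩ := Finset.mem_image.mp h
              cases h0; exact he0
            · obtain ⟨i, _, hi⟩ := Finset.mem_image.mp h
              cases hi
          simp only [hy'def, Sum.elim_inl, Sum.inl.injEq] at hye'
          exact hye' ▸ Finset.mem_image_of_mem y heE
        · by_contra hwB
          have hc := countlyA w
          rw [if_neg hwB] at hc
          have hi : i ∈ Finset.range lx.length := by
            rcases Finset.mem_union.mp he' with h | h
            · obtain ⟨e0, _, h0⟩ := Finset.mem_image.mp h
              cases h0
            · obtain ⟨j, hj, h0⟩ := Finset.mem_image.mp h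
              cases h0; exact hj
          rw [← hD] at hi
          have hmem : i ∈ (Finset.range ly.length).filter
              (fun i => ly.getD i (Sum.inr 0) = Sum.inl w) := by
            refine Finset.mem_filter.mpr ⟨hi, ?_⟩
            simpa [hy'def] using hye'
          have hpos := Finset.card_pos.mpr ⟨i, hmem⟩
          have hcg : ((Finset.range ly.length).filter
              (fun i => ly.getD i (Sum.inr 0) = Sum.inl w)).card = cnt (Sum.inl w : Y ⊕ ℕ) ly :=
            count_getD ly (Sum.inr 0) (Sum.inl w)
          rw [hcg, hc] at hpos
          exact absurd hpos (lt_irrefl 0)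
      rw [h1, countlyA w, if_pos hwB]
      have h2 : fy w ≤ n := hy w
      omega
    | Sum.inr i =>
      have h1 : (E.filter (fun e => (Sum.inl (y e) : Y ⊕ ℕ) = Sum.inr i)).card = 0 := by
        rw [Finset.card_eq_zero, Finset.filter_eq_empty_iff]
        intro e _
        simp
      have hib : i < A.card := by
        by_contra hib
        have hc := countlyB i
        rw [if_neg hib] at hc
        rcases e' with e | j
        · simp [hy'def] at hye'
        · have hj : j ∈ Finset.range lx.length := by
            rcases Finset.mem_union.mp he' with h | h
            · obtain ⟨e0, _, h0⟩ := Finset.mem_image.mp h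
              cases h0
            · obtain ⟨j', hj', h0⟩ := Finset.mem_image.mp h
              cases h0; exact hj'
          rw [← hD] at hj
          have hmem : j ∈ (Finset.range ly.length).filter
              (fun j => ly.getD j (Sum.inr 0) = Sum.inr i) := by
            refine Finset.mem_filter.mpr ⟨hj, ?_⟩
            simpa [hy'def] using hye'
          have hpos := Finset.card_pos.mpr ⟨j, hmem⟩
          have hcg : ((Finset.range ly.length).filter
              (fun j => ly.getD j (Sum.inr 0) = Sum.inr i)).card = cnt (Sum.inr i : Y ⊕ ℕ) ly :=
            count_getD ly (Sum.inr 0) (Sum.inr i)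
          rw [hcg, hc] at hpos
          exact absurd hpos (lt_irrefl 0)
      rw [h1, countlyB i, if_pos hib]
      omega
  obtain ⟨φ', hφ'lt, hφ'prop⟩ := koenig_regular n E' x' y' regx regy
  have hmemE' : ∀ e ∈ E, (Sum.inl e : ε ⊕ ℕ) ∈ E' := by
    intro e he
    exact Finset.mem_union_left _ (Finset.mem_image_of_mem _ he)
  refine ⟨fun e => φ' (Sum.inl e), ?_, ?_⟩
  · intro e he
    exact hφ'lt _ (hmemE' e he)
  · intro e he f hf hne hadj
    refine hφ'prop _ (hmemE' e he) _ (hmemE' f hf) (fun hc => hne (by cases hc; rfl)) ?_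
    rcases hadj with h | h
    · exact Or.inl (by simp [hx'def, h])
    · exact Or.inr (by simp [hy'def, h])

/-- Stable matchings for Galvin's method: `M ⊆ F` is a "matching" dominating all other
edges, with preferences given by a proper labelling `φ`. -/
lemma stable_matching {ε X Y : Type*} [DecidableEq ε] [DecidableEq X] [DecidableEq Y] :
    ∀ (N : ℕ) (F : Finset ε) (x : ε → X) (y : ε → Y) (φ : ε → ℕ), F.card ≤ N →
    (∀ e ∈ F, ∀ f ∈ F, e ≠ f → x e = x f → φ e ≠ φ f) →
    (∀ e ∈ F, ∀ f ∈ F, e ≠ f → y e = y f → φ e ≠ φ f) →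
    ∃ M, M ⊆ F ∧ (∀ e ∈ M, ∀ f ∈ M, e ≠ f → x e ≠ x f ∧ y e ≠ y f) ∧
      (∀ f ∈ F, f ∉ M → ∃ e ∈ M, (x e = x f ∧ φ f < φ e) ∨ (y e = y f ∧ φ e < φ f)) := by
  intro N
  induction N with
  | zero =>
    intro F x y φ hcard _ _
    have : F = ∅ := Finset.card_eq_zero.mp (Nat.le_zero.mp hcard)
    subst this
    exact ⟨∅, Finset.Subset.refl _, by simp, by simp⟩
  | succ N ih =>
    intro F x y φ hcard hx hy
    by_cases hdel : ∃ f ∈ F, ∃ e ∈ F, e ≠ f ∧ y e = y f ∧ φ e < φ f ∧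
        ∀ g ∈ F, x g = x e → φ g ≤ φ e
    · obtain ⟨f, hfF, e, heF, hef, hyef, hφef, hfav⟩ := hdel
      have hsub : F.erase f ⊆ F := fun a ha => Finset.mem_of_mem_erase ha
      obtain ⟨M, hMsub, hMmatch, hMdom⟩ := ih (F.erase f) x y φ
        (by
          rw [Finset.card_erase_of_mem hfF]
          omega)
        (fun a ha b hb => hx a (hsub ha) b (hsub hb))
        (fun a ha b hb => hy a (hsub ha) b (hsub hb))
      refine ⟨M, hMsub.trans hsub, hMmatch, ?_⟩
      intro g hgF hgM
      by_cases hgf : g = f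
      · rw [hgf]
        have heF' : e ∈ F.erase f := Finset.mem_erase.mpr ⟨hef, heF⟩
        by_cases heM : e ∈ M
        · exact ⟨e, heM, Or.inr ⟨hyef, hφef⟩⟩
        · obtain ⟨m, hmM, hm⟩ := hMdom e heF' heM
          rcases hm with ⟨hxm, hφm⟩ | ⟨hym, hφm⟩
          · exact absurd (hfav m (hsub (hMsub hmM)) hxm) (by omega)
          · exact ⟨m, hmM, Or.inr ⟨hym.trans hyef, by omega⟩⟩
      · exact hMdom g (Finset.mem_erase.mpr ⟨hgf, hgF⟩) hgM
    · push_neg at hdel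
      refine ⟨F.filter (fun e => ∀ g ∈ F, x g = x e → φ g ≤ φ e), Finset.filter_subset _ _,
        ?_, ?_⟩
      · intro e heM f hfM hef
        obtain ⟨heF, hefav⟩ := Finset.mem_filter.mp heM
        obtain ⟨hfF, hffav⟩ := Finset.mem_filter.mp hfM
        constructor
        · intro hxef
          have h1 := hefav f hfF hxef.symm
          have h2 := hffav e heF hxef
          exact hx e heF f hfF hef hxef (by omega)
        · intro hyef
          have hne := hy e heF f hfF hef hyef
          rcases Nat.lt_or_ge (φ e) (φ f) with hlt | hge
          · obtain ⟨g, hgF, hxg, hφg⟩ := hdel f hfF e heF hef hyef hlt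
            exact absurd (hefav g hgF hxg) (by omega)
          · have hlt : φ f < φ e := by omega
            obtain ⟨g, hgF, hxg, hφg⟩ := hdel e heF f hfF (Ne.symm hef) hyef.symm hlt
            exact absurd (hffav g hgF hxg) (by omega)
      · intro f hfF hfM
        rw [Finset.mem_filter] at hfM
        push_neg at hfM
        obtain ⟨g, hgF, hxg, hφg⟩ := hfM hfF
        have hFx : (F.filter (fun g => x g = x f)).Nonempty := ⟨g, Finset.mem_filter.mpr ⟨hgF, hxg⟩⟩
        obtain ⟨m, hm, hmax⟩ := Finset.exists_max_image _ φ hFx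
        obtain ⟨hmF, hxm⟩ := Finset.mem_filter.mp hm
        refine ⟨m, Finset.mem_filter.mpr ⟨hmF, ?_⟩, Or.inl ⟨hxm, ?_⟩⟩
        · intro g' hg'F hxg'
          exact hmax g' (Finset.mem_filter.mpr ⟨hg'F, by rw [hxg', hxm]⟩)
        · have := hmax g (Finset.mem_filter.mpr ⟨hgF, hxg⟩)
          omega

/-- Galvin's theorem, fiber-multigraph version: list edge colouring of bipartite
multigraphs given a proper bounded labelling `φ`. -/
lemma galvin {ε X Y C : Type*} [DecidableEq ε] [DecidableEq X] [DecidableEq Y] [DecidableEq C] :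
    ∀ (N : ℕ) (F : Finset ε) (x : ε → X) (y : ε → Y) (φ : ε → ℕ) (L : ε → Finset C) (c₀ : C),
    F.card ≤ N →
    (∀ e ∈ F, ∀ f ∈ F, e ≠ f → (x e = x f ∨ y e = y f) → φ e ≠ φ f) →
    (∀ e ∈ F, (F.filter (fun f => f ≠ e ∧
        ((x f = x e ∧ φ e < φ f) ∨ (y f = y e ∧ φ f < φ e)))).card < (L e).card) →
    ∃ ω : ε → C, (∀ e ∈ F, ω e ∈ L e) ∧
      (∀ e ∈ F, ∀ f ∈ F, e ≠ f → (x e = x f ∨ y e = y f) → ω e ≠ ω f) := by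
  intro N
  induction N with
  | zero =>
    intro F x y φ L c₀ hcard _ _
    have : F = ∅ := Finset.card_eq_zero.mp (Nat.le_zero.mp hcard)
    subst this
    exact ⟨fun _ => c₀, by simp, by simp⟩
  | succ N ih =>
    intro F x y φ L c₀ hcard hprop hA
    rcases Finset.eq_empty_or_nonempty F with rfl | ⟨e₀, he₀⟩
    · exact ⟨fun _ => c₀, by simp, by simp⟩
    have hL₀ : (L e₀).Nonempty :=
      Finset.card_pos.mp (Nat.lt_of_le_of_lt (Nat.zero_le _) (hA e₀ he₀))
    obtain ⟨c, hc⟩ := hL₀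
    set Fc := F.filter (fun e => c ∈ L e) with hFc
    have he₀Fc : e₀ ∈ Fc := Finset.mem_filter.mpr ⟨he₀, hc⟩
    have hFcF : Fc ⊆ F := Finset.filter_subset _ _
    obtain ⟨M, hMFc, hMmatch, hMdom⟩ := stable_matching Fc.card Fc x y φ le_rfl
      (fun a ha b hb hab hxab => hprop a (hFcF ha) b (hFcF hb) hab (Or.inl hxab))
      (fun a ha b hb hab hyab => hprop a (hFcF ha) b (hFcF hb) hab (Or.inr hyab))
    have hMF : M ⊆ F := hMFc.trans hFcF
    have hMne : M.Nonempty := by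
      by_cases he₀M : e₀ ∈ M
      · exact ⟨e₀, he₀M⟩
      · obtain ⟨m, hmM, _⟩ := hMdom e₀ he₀Fc he₀M
        exact ⟨m, hmM⟩
    set F' := F \ M with hF'
    have hF'card : F'.card ≤ N := by
      rw [hF', Finset.card_sdiff_of_subset hMF]
      have := Finset.card_pos.mpr hMne
      omega
    have hF'F : F' ⊆ F := Finset.sdiff_subset
    have hMdisj : ∀ e ∈ F', e ∉ M := fun e he => (Finset.mem_sdiff.mp he).2
    have hinv : ∀ e ∈ F', (F'.filter (fun f => f ≠ e ∧
        ((x f = x e ∧ φ e < φ f) ∨ (y f = y e ∧ φ f < φ e)))).card < ((L e).erase c).card := by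
      intro e he
      have heF : e ∈ F := hF'F he
      have hAe := hA e heF
      by_cases hce : c ∈ L e
      · have heFc : e ∈ Fc := Finset.mem_filter.mpr ⟨heF, hce⟩
        obtain ⟨m, hmM, hm⟩ := hMdom e heFc (hMdisj e he)
        have hmne : m ≠ e := by
          intro h
          exact hMdisj e he (h ▸ hmM)
        have hmmem : m ∈ F.filter (fun f => f ≠ e ∧
            ((x f = x e ∧ φ e < φ f) ∨ (y f = y e ∧ φ f < φ e))) :=
          Finset.mem_filter.mpr ⟨hMF hmM, hmne, hm⟩
        have hsub : F'.filter (fun f => f ≠ e ∧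
            ((x f = x e ∧ φ e < φ f) ∨ (y f = y e ∧ φ f < φ e)))
            ⊆ (F.filter (fun f => f ≠ e ∧
            ((x f = x e ∧ φ e < φ f) ∨ (y f = y e ∧ φ f < φ e)))).erase m := by
          intro f hf
          rw [Finset.mem_filter] at hf
          refine Finset.mem_erase.mpr ⟨?_, Finset.mem_filter.mpr ⟨hF'F hf.1, hf.2⟩⟩
          intro h
          exact hMdisj f hf.1 (h ▸ hmM)
        have h1 := Finset.card_le_card hsub
        rw [Finset.card_erase_of_mem hmmem] at h1
        have h2 : ((L e).erase c).card = (L e).card - 1 := Finset.card_erase_of_mem hce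
        have h3 : 0 < (L e).card := Nat.lt_of_le_of_lt (Nat.zero_le _) hAe
        have h4 : 0 < (F.filter (fun f => f ≠ e ∧
            ((x f = x e ∧ φ e < φ f) ∨ (y f = y e ∧ φ f < φ e)))).card :=
          Finset.card_pos.mpr ⟨m, hmmem⟩
        clear hm hmmem hsub
        omega
      · have h2 : (L e).erase c = L e := Finset.erase_eq_of_notMem hce
        rw [h2]
        refine Nat.lt_of_le_of_lt (Finset.card_le_card ?_) hAe
        intro f hf
        rw [Finset.mem_filter] at hf ⊢
        exact ⟨hF'F hf.1, hf.2⟩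
    obtain ⟨ω', hω'mem, hω'prop⟩ := ih F' x y φ (fun e => (L e).erase c) c₀ hF'card
      (fun a ha b hb hab hadj => hprop a (hF'F ha) b (hF'F hb) hab hadj)
      hinv
    refine ⟨fun e => if e ∈ M then c else ω' e, ?_, ?_⟩
    · intro e he
      by_cases heM : e ∈ M
      · simp only [heM, if_true]
        exact (Finset.mem_filter.mp (hMFc heM)).2
      · simp only [heM, if_false]
        exact Finset.mem_of_mem_erase (hω'mem e (Finset.mem_sdiff.mpr ⟨he, heM⟩))
    · intro e he f hf hne hadj
      by_cases heM : e ∈ M <;> by_cases hfM : f ∈ M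
      · obtain ⟨hxne, hyne⟩ := hMmatch e heM f hfM hne
        rcases hadj with h | h
        · exact absurd h hxne
        · exact absurd h hyne
      · simp only [heM, hfM, if_true, if_false]
        have := hω'mem f (Finset.mem_sdiff.mpr ⟨hf, hfM⟩)
        exact fun hcc => (Finset.mem_erase.mp this).1 hcc.symm
      · simp only [heM, hfM, if_true, if_false]
        have := hω'mem e (Finset.mem_sdiff.mpr ⟨he, heM⟩)
        exact (Finset.mem_erase.mp this).1
      · simp only [heM, hfM, if_false]
        exact hω'prop e (Finset.mem_sdiff.mpr ⟨he, heM⟩) f (Finset.mem_sdiff.mpr ⟨hf, hfM⟩)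
          hne hadj

/-- Every `d`-regular graph admits a choice of "tail" for each edge such that each vertex
is the tail of at most `⌈d/2⌉` edges and the non-tail endpoint of at most `⌈d/2⌉` edges. -/
lemma balanced_tails {V : Type*} [Fintype V] [DecidableEq V] (G : SimpleGraph V)
    [DecidableRel G.Adj] (d : ℕ) (hreg : G.IsRegularOfDegree d) :
    ∃ T : Sym2 V → V, (∀ e ∈ G.edgeFinset, T e ∈ e) ∧
      (∀ v : V, (G.edgeFinset.filter (fun e => T e = v)).card ≤ (d + 1) / 2 ∧
        (G.edgeFinset.filter (fun e => v ∈ e ∧ T e ≠ v)).card ≤ (d + 1) / 2) := by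
  classical
  by_cases hE : G.edgeFinset = ∅
  · refine ⟨fun e => (Quot.out e).1, ?_, ?_⟩
    · intro e he
      rw [hE] at he
      exact absurd he (Finset.notMem_empty e)
    · intro v
      rw [hE]
      simp
  obtain ⟨e₀, he₀⟩ := Finset.nonempty_of_ne_empty hE
  set v₀ : V := (Quot.out e₀).1 with hv₀
  set c := (d + 1) / 2 with hc
  set n := Fintype.card V with hn
  set m := if Even d then 0 else n / 2 with hm
  set lo := (Finset.univ : Finset V).toList with hlo
  set pa : Sym2 V → V := fun e => (Quot.out e).1 with hpa
  set pb : Sym2 V → V := fun e => (Quot.out e).2 with hpb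
  have hkey : ∀ e : Sym2 V, s(pa e, pb e) = e := fun e => Quot.out_eq e
  have hnab : ∀ e ∈ G.edgeFinset, pa e ≠ pb e := by
    intro e he hdiag
    have h2 := G.not_isDiag_of_mem_edgeSet (SimpleGraph.mem_edgeFinset.mp he)
    rw [← hkey e] at h2
    exact h2 (Sym2.mk_isDiag_iff.mpr hdiag)
  have hmemiff : ∀ (e : Sym2 V) (v : V), v ∈ e ↔ (v = pa e ∨ v = pb e) := by
    intro e v
    conv_lhs => rw [← hkey e]
    exact Sym2.mem_iff
  set verts : Sym2 V ⊕ ℕ → Finset V :=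
    Sum.elim (fun e => {pa e, pb e}) (fun i => {lo.getD (2*i) v₀, lo.getD (2*i+1) v₀})
    with hverts
  set clones : V → Finset (V × ℕ) := fun v => {v} ×ˢ Finset.range c with hclones
  set t : Sym2 V ⊕ ℕ → Finset (V × ℕ) := fun l => (verts l).biUnion clones with htt
  set s : Finset (Sym2 V ⊕ ℕ) := G.edgeFinset.image Sum.inl ∪ (Finset.range m).image Sum.inr
    with hs
  have hlolen : lo.length = n := by rw [hlo, Finset.length_toList, hn]; rfl
  have hlond : lo.Nodup := Finset.nodup_toList _
  have hgetinj : ∀ i j, i < lo.length → j < lo.length →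
      lo.getD i v₀ = lo.getD j v₀ → i = j := by
    intro i j hi hj hij
    rw [List.getD_eq_getElem lo v₀ hi, List.getD_eq_getElem lo v₀ hj] at hij
    exact List.Nodup.getElem_inj_iff hlond |>.mp hij
  have hm2 : 2 * m ≤ n := by
    rw [hm]
    split <;> omega
  have hhs : d * n = 2 * G.edgeFinset.card := by
    have h1 := G.sum_degrees_eq_twice_card_edges
    rw [Finset.sum_congr rfl (fun v _ => hreg v), Finset.sum_const, smul_eq_mul] at h1
    rw [← h1, hn, mul_comm]
    rfl
  have hsize : G.edgeFinset.card + m = c * n := by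
    by_cases hev : Even d
    · obtain ⟨k, hk⟩ := hev
      have hcval : c = k := by rw [hc, hk]; omega
      have h1 : d * n = 2 * (k * n) := by rw [hk]; ring
      rw [hm, if_pos ⟨k, hk⟩, hcval]
      rw [h1] at hhs
      omega
    · have hnev : Even n := by
        have h2 : Even (d * n) := by
          rw [hhs]
          exact ⟨G.edgeFinset.card, two_mul _⟩
        rcases Nat.even_mul.mp h2 with h | h
        · exact absurd h hev
        · exact h
      obtain ⟨p, hp⟩ := hnev
      have h1 : d * n = 2 * (d * p) := by rw [hp]; ring
      have h3 : 2 * c = d + 1 := by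
        rw [hc]
        have := Nat.odd_iff.mp (Nat.not_even_iff_odd.mp hev)
        omega
      have h4 : 2 * (c * p) = d * p + p := by
        calc 2 * (c * p) = (2 * c) * p := by ring
          _ = (d + 1) * p := by rw [h3]
          _ = d * p + p := by ring
      have h2 : c * n = c * p + c * p := by rw [hp]; ring
      have h5 : n / 2 = p := by omega
      rw [hm, if_neg hev, h5]
      rw [h1] at hhs
      omega
  have hdumne : ∀ i < m, lo.getD (2*i) v₀ ≠ lo.getD (2*i+1) v₀ := by
    intro i hi heq
    have h1 : 2*i < lo.length := by omega
    have h2 : 2*i+1 < lo.length := by omega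
    have := hgetinj _ _ h1 h2 heq
    omega
  have hdum1 : ∀ v : V, ((Finset.range m).filter (fun i => v ∈ verts (Sum.inr i))).card ≤ 1 := by
    intro v
    rw [Finset.card_le_one]
    intro i hi j hj
    rw [Finset.mem_filter, Finset.mem_range] at hi hj
    obtain ⟨him, hiv⟩ := hi
    obtain ⟨hjm, hjv⟩ := hj
    simp only [hverts, Sum.elim_inr, Finset.mem_insert, Finset.mem_singleton] at hiv hjv
    have hi1 : 2*i < lo.length := by omega
    have hi2 : 2*i+1 < lo.length := by omega
    have hj1 : 2*j < lo.length := by omega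
    have hj2 : 2*j+1 < lo.length := by omega
    rcases hiv with hiv | hiv <;> rcases hjv with hjv | hjv
    · have := hgetinj _ _ hi1 hj1 (hiv ▸ hjv ▸ rfl)
      omega
    · have := hgetinj _ _ hi1 hj2 (hiv ▸ hjv ▸ rfl)
      omega
    · have := hgetinj _ _ hi2 hj1 (hiv ▸ hjv ▸ rfl)
      omega
    · have := hgetinj _ _ hi2 hj2 (hiv ▸ hjv ▸ rfl)
      omega
  have hmems : ∀ l, l ∈ s ↔
      (∃ e ∈ G.edgeFinset, l = Sum.inl e) ∨ (∃ i, i < m ∧ l = Sum.inr i) := by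
    intro l
    rw [hs, Finset.mem_union]
    constructor
    · rintro (h | h)
      · obtain ⟨e, he, rfl⟩ := Finset.mem_image.mp h
        exact Or.inl ⟨e, he, rfl⟩
      · obtain ⟨i, hi, rfl⟩ := Finset.mem_image.mp h
        exact Or.inr ⟨i, Finset.mem_range.mp hi, rfl⟩
    · rintro (⟨e, he, rfl⟩ | ⟨i, hi, rfl⟩)
      · exact Or.inl (Finset.mem_image_of_mem _ he)
      · exact Or.inr (Finset.mem_image_of_mem _ (Finset.mem_range.mpr hi))
  have hverts2 : ∀ l ∈ s, (verts l).card = 2 := by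
    intro l hl
    rcases (hmems l).mp hl with ⟨e, he, rfl⟩ | ⟨i, hi, rfl⟩
    · simp only [hverts, Sum.elim_inl]
      exact Finset.card_pair (hnab e he)
    · simp only [hverts, Sum.elim_inr]
      exact Finset.card_pair (hdumne i hi)
  have hclcard : ∀ v, (clones v).card = c := by
    intro v
    rw [hclones]
    simp
  have hcldisj : ∀ v w : V, v ≠ w → Disjoint (clones v) (clones w) := by
    intro v w hvw
    rw [Finset.disjoint_left]
    intro p hp hq
    rw [hclones] at hp hq
    simp only [Finset.mem_product, Finset.mem_singleton] at hp hq
    exact hvw (hp.1.symm.trans hq.1)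
  have hdeg : ∀ v, (G.edgeFinset.filter (fun e => v ∈ e)).card = d := by
    intro v
    rw [← SimpleGraph.incidenceFinset_eq_filter, SimpleGraph.card_incidenceFinset_eq_degree]
    exact hreg v
  have hevm : Even d → m = 0 := by
    intro h
    rw [hm, if_pos h]
  -- Hall's condition
  have hall : ∀ S ⊆ s, S.card ≤ (S.biUnion t).card := by
    intro S hS
    set VS := S.biUnion verts with hVS
    have h1 : S.biUnion t = VS.biUnion clones := (Finset.biUnion_biUnion S verts clones).symm
    have h2 : (VS.biUnion clones).card = c * VS.card := by
      rw [Finset.card_biUnion (fun a _ b _ hab => hcldisj a b hab),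
        Finset.sum_congr rfl (fun v _ => hclcard v), Finset.sum_const, smul_eq_mul, mul_comm]
    set P := (S ×ˢ (Finset.univ : Finset V)).filter (fun p => p.2 ∈ verts p.1) with hP
    have hP1 : P.card = ∑ l ∈ S, (verts l).card := by
      rw [Finset.card_eq_sum_card_fiberwise (f := Prod.fst) (t := S)
        (fun p hp => (Finset.mem_product.mp (Finset.mem_filter.mp hp).1).1)]
      refine Finset.sum_congr rfl ?_
      intro l hl
      have : P.filter (fun p => p.1 = l) = {l} ×ˢ (verts l) := by
        ext ⟨l', v⟩
        rw [Finset.mem_filter, hP, Finset.mem_filter, Finset.mem_product, Finset.mem_product,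
          Finset.mem_singleton]
        constructor
        · rintro ⟨⟨⟨_, _⟩, hv⟩, rfl⟩
          exact ⟨rfl, hv⟩
        · rintro ⟨rfl, hv⟩
          exact ⟨⟨⟨hl, Finset.mem_univ _⟩, hv⟩, rfl⟩
      rw [this, Finset.card_product, Finset.card_singleton, one_mul]
    have hP2 : P.card = ∑ v ∈ (Finset.univ : Finset V),
        (S.filter (fun l => v ∈ verts l)).card := by
      rw [Finset.card_eq_sum_card_fiberwise (f := Prod.snd) (t := Finset.univ)
        (fun p _ => Finset.mem_univ _)]
      refine Finset.sum_congr rfl ?_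
      intro v _
      have : P.filter (fun p => p.2 = v) = (S.filter (fun l => v ∈ verts l)) ×ˢ {v} := by
        ext ⟨l, v'⟩
        rw [Finset.mem_filter, hP, Finset.mem_filter, Finset.mem_product, Finset.mem_product,
          Finset.mem_filter, Finset.mem_singleton]
        constructor
        · rintro ⟨⟨⟨hl, _⟩, hv⟩, rfl⟩
          exact ⟨⟨hl, hv⟩, rfl⟩
        · rintro ⟨⟨hl, hv⟩, rfl⟩
          exact ⟨⟨⟨hl, Finset.mem_univ _⟩, hv⟩, rfl⟩
      rw [this, Finset.card_product, Finset.card_singleton, mul_one]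
    have hP3 : P.card = ∑ v ∈ VS, (S.filter (fun l => v ∈ verts l)).card := by
      rw [hP2]
      refine (Finset.sum_subset (Finset.subset_univ VS) ?_).symm
      intro v _ hv
      rw [Finset.card_eq_zero, Finset.filter_eq_empty_iff]
      intro l hl hvl
      exact hv (Finset.mem_biUnion.mpr ⟨l, hl, hvl⟩)
    have hP4 : ∀ v : V, (S.filter (fun l => v ∈ verts l)).card ≤ 2 * c := by
      intro v
      have hsplit : S.filter (fun l => v ∈ verts l) ⊆
          (G.edgeFinset.filter (fun e => v ∈ verts (Sum.inl e))).image Sum.inl ∪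
          ((Finset.range m).filter (fun i => v ∈ verts (Sum.inr i))).image Sum.inr := by
        intro l hl
        obtain ⟨hlS, hlv⟩ := Finset.mem_filter.mp hl
        rcases (hmems l).mp (hS hlS) with ⟨e, he, rfl⟩ | ⟨i, hi, rfl⟩
        · exact Finset.mem_union_left _ (Finset.mem_image_of_mem _
            (Finset.mem_filter.mpr ⟨he, hlv⟩))
        · exact Finset.mem_union_right _ (Finset.mem_image_of_mem _
            (Finset.mem_filter.mpr ⟨Finset.mem_range.mpr hi, hlv⟩))
      have h5 := (Finset.card_le_card hsplit).trans (Finset.card_union_le _ _)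
      rw [Finset.card_image_of_injective _ Sum.inl_injective,
        Finset.card_image_of_injective _ Sum.inr_injective] at h5
      have h6 : (G.edgeFinset.filter (fun e => v ∈ verts (Sum.inl e))).card = d := by
        rw [← hdeg v]
        congr 1
        apply Finset.filter_congr
        intro e he
        simp only [hverts, Sum.elim_inl, Finset.mem_insert, Finset.mem_singleton]
        exact (hmemiff e v).symm
      have h7 := hdum1 v
      by_cases hev : Even d
      · have h8 : ((Finset.range m).filter (fun i => v ∈ verts (Sum.inr i))).card = 0 := by
          rw [hevm hev]
          simp
        have h9 : d % 2 = 0 := Nat.even_iff.mp hev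
        rw [hc]
        omega
      · have h9 : d % 2 = 1 := Nat.odd_iff.mp (Nat.not_even_iff_odd.mp hev)
        rw [hc]
        omega
    have h10 : 2 * S.card = P.card := by
      rw [hP1, Finset.sum_congr rfl (fun l hl => hverts2 l (hS hl)), Finset.sum_const,
        smul_eq_mul, mul_comm]
    have h11 : P.card ≤ 2 * (c * VS.card) := by
      rw [hP3]
      calc ∑ v ∈ VS, (S.filter (fun l => v ∈ verts l)).card
          ≤ ∑ _v ∈ VS, 2 * c := Finset.sum_le_sum (fun v _ => hP4 v)
        _ = 2 * (c * VS.card) := by rw [Finset.sum_const, smul_eq_mul]; ring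
    rw [h1, h2]
    omega
  obtain ⟨F, hFinj, hFt⟩ := hall_subset s t hall
  have hsinl : ∀ e ∈ G.edgeFinset, Sum.inl e ∈ s := fun e he =>
    Finset.mem_union_left _ (Finset.mem_image_of_mem _ he)
  set T : Sym2 V → V := fun e =>
    if h : e ∈ G.edgeFinset then (F ⟨Sum.inl e, hsinl e h⟩).1 else pa e with hT
  have hFverts : ∀ (l : {x // x ∈ s}), (F l).1 ∈ verts l.val ∧ (F l).2 < c := by
    intro l
    have := hFt l
    rw [htt] at this
    obtain ⟨u, hu, hcl⟩ := Finset.mem_biUnion.mp this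
    rw [hclones] at hcl
    obtain ⟨h1, h2⟩ := Finset.mem_product.mp hcl
    rw [Finset.mem_singleton] at h1
    rw [Finset.mem_range] at h2
    exact ⟨h1 ▸ hu, h2⟩
  have hTmem : ∀ e ∈ G.edgeFinset, T e ∈ e := by
    intro e he
    rw [hT]
    simp only [he, dif_pos]
    have h1 := (hFverts ⟨Sum.inl e, hsinl e he⟩).1
    simp only [hverts, Sum.elim_inl, Finset.mem_insert, Finset.mem_singleton] at h1
    exact (hmemiff e _).mpr h1
  -- the image of F is all of the clones
  have hscard : s.card + 0 = c * n := by
    rw [hs, Finset.card_union_of_disjoint, Finset.card_image_of_injective _ Sum.inl_injective,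
      Finset.card_image_of_injective _ Sum.inr_injective, Finset.card_range]
    · omega
    · rw [Finset.disjoint_left]
      intro l hl hr
      obtain ⟨e, _, rfl⟩ := Finset.mem_image.mp hl
      obtain ⟨i, _, hi⟩ := Finset.mem_image.mp hr
      cases hi
  have hClcard : ((Finset.univ : Finset V).biUnion clones).card = c * n := by
    rw [Finset.card_biUnion (fun a _ b _ hab => hcldisj a b hab),
      Finset.sum_congr rfl (fun v _ => hclcard v), Finset.sum_const, smul_eq_mul, mul_comm, hn]
    rfl
  have himg : s.attach.image F = (Finset.univ : Finset V).biUnion clones := by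
    apply Finset.eq_of_subset_of_card_le
    · intro p hp
      obtain ⟨l, _, rfl⟩ := Finset.mem_image.mp hp
      have h1 := (hFverts l).1
      have h2 := (hFverts l).2
      refine Finset.mem_biUnion.mpr ⟨(F l).1, Finset.mem_univ _, ?_⟩
      rw [hclones]
      exact Finset.mem_product.mpr ⟨Finset.mem_singleton_self _, Finset.mem_range.mpr h2⟩
    · rw [Finset.card_image_of_injective _ hFinj, Finset.card_attach, hClcard]
      omega
  have houtbound : ∀ v : V, (G.edgeFinset.filter (fun e => T e = v)).card ≤ c := by
    intro v
    have h1 : (G.edgeFinset.filter (fun e => T e = v)).card ≤ (clones v).card := by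
      apply Finset.card_le_card_of_injOn
        (fun e => if h : e ∈ G.edgeFinset then F ⟨Sum.inl e, hsinl e h⟩ else (v₀, 0))
      · intro e he
        obtain ⟨heE, heT⟩ := Finset.mem_filter.mp he
        simp only [heE, dif_pos]
        have h2 := (hFverts ⟨Sum.inl e, hsinl e heE⟩).2
        rw [hclones]
        refine Finset.mem_product.mpr ⟨?_, Finset.mem_range.mpr h2⟩
        rw [Finset.mem_singleton]
        rw [hT] at heT
        simp only [heE, dif_pos] at heT
        exact heT
      · intro e he f hf hef
        rw [Finset.mem_coe, Finset.mem_filter] at he hf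
        simp only [he.1, hf.1, dif_pos] at hef
        have := hFinj hef
        exact Sum.inl_injective (congrArg Subtype.val this)
    rw [hclcard v] at h1
    exact h1
  have hinbound : ∀ v : V, (G.edgeFinset.filter (fun e => v ∈ e ∧ T e ≠ v)).card ≤ c := by
    intro v
    -- the partition of edges at v
    have hpart : (G.edgeFinset.filter (fun e => v ∈ e ∧ T e = v)).card
        + (G.edgeFinset.filter (fun e => v ∈ e ∧ T e ≠ v)).card = d := by
      rw [← hdeg v]
      rw [← Finset.filter_filter, ← Finset.filter_filter]
      exact Finset.card_filter_add_card_filter_not (fun e => T e = v)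
    -- lower bound on the number of edges with tail v
    set Sv := s.attach.filter (fun l => F l ∈ clones v) with hSv
    have h1 : Sv.image F = clones v := by
      apply Finset.Subset.antisymm
      · intro p hp
        obtain ⟨l, hl, rfl⟩ := Finset.mem_image.mp hp
        exact (Finset.mem_filter.mp hl).2
      · intro p hp
        have hpCl : p ∈ (Finset.univ : Finset V).biUnion clones := by
          refine Finset.mem_biUnion.mpr ⟨v, Finset.mem_univ _, hp⟩
        rw [← himg] at hpCl
        obtain ⟨l, hl, rfl⟩ := Finset.mem_image.mp hpCl
        exact Finset.mem_image_of_mem _ (Finset.mem_filter.mpr ⟨hl, hp⟩)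
    have h2 : Sv.card = c := by
      rw [← hclcard v, ← h1, Finset.card_image_of_injective _ hFinj]
    have h3 : Sv.card ≤ (G.edgeFinset.filter (fun e => v ∈ e ∧ T e = v)).card
        + ((Finset.range m).filter (fun i => v ∈ verts (Sum.inr i))).card := by
      have hsub : Sv.image Subtype.val ⊆
          (G.edgeFinset.filter (fun e => v ∈ e ∧ T e = v)).image Sum.inl ∪
          ((Finset.range m).filter (fun i => v ∈ verts (Sum.inr i))).image Sum.inr := by
        intro l' hl'
        obtain ⟨l, hl, rfl⟩ := Finset.mem_image.mp hl'
        obtain ⟨hls, hlcl⟩ := Finset.mem_filter.mp hl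
        have hfst : (F l).1 = v := by
          rw [hclones] at hlcl
          exact Finset.mem_singleton.mp (Finset.mem_product.mp hlcl).1
        have hvverts : v ∈ verts l.val := hfst ▸ (hFverts l).1
        rcases (hmems l.val).mp l.property with ⟨e, he, hle⟩ | ⟨i, hi, hle⟩
        · refine Finset.mem_union_left _ ?_
          rw [hle]
          refine Finset.mem_image_of_mem _ (Finset.mem_filter.mpr ⟨he, ?_, ?_⟩)
          · rw [hle] at hvverts
            simp only [hverts, Sum.elim_inl, Finset.mem_insert, Finset.mem_singleton] at hvverts
            exact (hmemiff e v).mpr hvverts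
          · rw [hT]
            simp only [he, dif_pos]
            have : l = ⟨Sum.inl e, hsinl e he⟩ := Subtype.ext hle
            rw [← this]
            exact hfst
        · refine Finset.mem_union_right _ ?_
          rw [hle]
          refine Finset.mem_image_of_mem _ (Finset.mem_filter.mpr
            ⟨Finset.mem_range.mpr hi, ?_⟩)
          rw [hle] at hvverts
          exact hvverts
      have h4 := (Finset.card_le_card hsub).trans (Finset.card_union_le _ _)
      rw [Finset.card_image_of_injective _ Subtype.val_injective,
        Finset.card_image_of_injective _ Sum.inl_injective,
        Finset.card_image_of_injective _ Sum.inr_injective] at h4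
      exact h4
    have h5 := hdum1 v
    by_cases hev : Even d
    · have h8 : ((Finset.range m).filter (fun i => v ∈ verts (Sum.inr i))).card = 0 := by
        rw [hevm hev]
        simp
      have h9 : d % 2 = 0 := Nat.even_iff.mp hev
      rw [hc] at h2 ⊢
      omega
    · have h9 : d % 2 = 1 := Nat.odd_iff.mp (Nat.not_even_iff_odd.mp hev)
      rw [hc] at h2 ⊢
      omega
  exact ⟨T, hTmem, fun v => ⟨houtbound v, hinbound v⟩⟩

/-- Let `k ≥ 2` and let `G` be a finite simple `d`-regular graph with
`d ≥ k² − k` such that `⌊d/k⌋` is even. Then for every list assignment with lists of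
`k+1` colours, `G` admits an `L`-colouring that is a `1/k`-majority edge colouring. -/
theorem majority_list_edge_colouring_regular_even_floor
    (k d : ℕ) (hk : 2 ≤ k)
    {V : Type*} [Fintype V] [DecidableEq V] (G : SimpleGraph V) [DecidableRel G.Adj]
    (hreg : G.IsRegularOfDegree d) (hd : k ^ 2 - k ≤ d) (heven : Even (d / k))
    {C : Type*} (L : Sym2 V → Finset C)
    (hL : ∀ e ∈ G.edgeSet, (L e).card = k + 1) :
    ∃ ω : Sym2 V → C,
      (∀ e ∈ G.edgeSet, ω e ∈ L e) ∧
      ∀ (v : V) (c : C),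
        ((G.incidenceSet v ∩ {e | ω e = c}).ncard : ℝ) ≤ (G.degree v : ℝ) / k := by
  classical
  rcases isEmpty_or_nonempty V with hVe | hV
  · have hSym : IsEmpty (Sym2 V) := by
      constructor
      intro e
      induction e using Sym2.ind with
      | _ x y => exact hVe.false x
    exact ⟨fun e => isEmptyElim e, fun e he => isEmptyElim e, fun v => isEmptyElim v⟩
  -- basic arithmetic
  have hk0 : 0 < k := by omega
  have hkk : k * k = k ^ 2 := (sq k).symm
  have hd2 : 2 ≤ d := by
    have h1 : 2 * k ≤ k * k := Nat.mul_le_mul_right k hk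
    omega
  -- there is an edge, hence a colour
  obtain ⟨v1⟩ := hV
  have hdegv1 : 0 < G.degree v1 := by rw [hreg v1]; omega
  obtain ⟨w1, hw1⟩ := (G.degree_pos_iff_exists_adj v1).mp hdegv1
  have he₀ : s(v1, w1) ∈ G.edgeSet := G.mem_edgeSet.mpr hw1
  have hLne : (L s(v1, w1)).Nonempty := by
    rw [← Finset.card_pos, hL _ he₀]
    omega
  obtain ⟨c₀, _⟩ := hLne
  -- arithmetic on t = d / k
  set tt := d / k with htt
  obtain ⟨s₀, hs₀⟩ := heven
  have hs₀' : tt = s₀ + s₀ := hs₀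
  set n := (k + 1) * s₀ with hn
  have htk : tt * k ≤ d := Nat.div_mul_le_self d k
  have htlb : k - 1 ≤ tt := by
    rw [htt, Nat.le_div_iff_mul_le hk0]
    have : (k - 1) * k = k * k - k := by
      rw [Nat.sub_mul, one_mul, mul_comm]
    omega
  have hs₀1 : 1 ≤ s₀ := by omega
  have hdiv : k * tt + d % k = d := Nat.div_add_mod d k
  have hmod : d % k < k := Nat.mod_lt _ hk0
  have hktt : k * tt + tt = 2 * n := by
    rw [hn, hs₀']
    ring
  have hd2n : d ≤ 2 * n := by omega
  have hcn : (d + 1) / 2 ≤ n := by omega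
  -- balanced orientation
  obtain ⟨T, hTmem, hbounds⟩ := balanced_tails G d hreg
  set H : Sym2 V → V := fun e =>
    if (Quot.out e).1 = T e then (Quot.out e).2 else (Quot.out e).1 with hH
  have hkey : ∀ e : Sym2 V, s((Quot.out e).1, (Quot.out e).2) = e := fun e => Quot.out_eq e
  have hTH : ∀ e ∈ G.edgeFinset, s(T e, H e) = e ∧ H e ≠ T e := by
    intro e he
    have hdiag := G.not_isDiag_of_mem_edgeSet (SimpleGraph.mem_edgeFinset.mp he)
    have hab : (Quot.out e).1 ≠ (Quot.out e).2 := by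
      intro hcontra
      apply hdiag
      rw [← hkey e]
      exact Sym2.mk_isDiag_iff.mpr hcontra
    have hTe : T e = (Quot.out e).1 ∨ T e = (Quot.out e).2 := by
      have h1 : T e ∈ s((Quot.out e).1, (Quot.out e).2) := by
        rw [hkey e]
        exact hTmem e he
      exact Sym2.mem_iff.mp h1
    rcases hTe with h1 | h1
    · have hcond : (Quot.out e).1 = T e := h1.symm
      have hHe : H e = (Quot.out e).2 := by
        rw [hH]
        exact if_pos hcond
      refine ⟨?_, ?_⟩
      · rw [hHe, ← hcond]
        exact hkey e
      · rw [hHe, ← hcond]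
        exact fun hc => hab hc.symm
    · have hcond : ¬((Quot.out e).1 = T e) := by
        rw [h1]
        exact hab
      have hHe : H e = (Quot.out e).1 := by
        rw [hH]
        exact if_neg hcond
      refine ⟨?_, ?_⟩
      · rw [hHe, h1, Sym2.eq_swap]
        exact hkey e
      · rw [hHe, h1]
        exact hab
  have hmem2 : ∀ e ∈ G.edgeFinset, ∀ u : V, u ∈ e ↔ (u = T e ∨ u = H e) := by
    intro e he u
    conv_lhs => rw [← (hTH e he).1]
    exact Sym2.mem_iff
  -- fiber bounds
  have hxfib : ∀ v : V, (G.edgeFinset.filter (fun e => T e = v)).card ≤ n :=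
    fun v => ((hbounds v).1).trans hcn
  have hyfib : ∀ v : V, (G.edgeFinset.filter (fun e => H e = v)).card ≤ n := by
    intro v
    refine le_trans (le_trans (Finset.card_le_card ?_) (hbounds v).2) hcn
    intro e he
    obtain ⟨heE, heH⟩ := Finset.mem_filter.mp he
    refine Finset.mem_filter.mpr ⟨heE, ?_, ?_⟩
    · exact (hmem2 e heE v).mpr (Or.inr heH.symm)
    · intro hTv
      exact (hTH e heE).2 (heH.trans hTv.symm)
  -- König labelling
  obtain ⟨φ, hφlt, hφprop⟩ := koenig G.edgeFinset T H n hxfib hyfib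
  -- Galvin list colouring with split colours
  have hgal := galvin (C := C × ℕ) G.edgeFinset.card G.edgeFinset T H φ
    (fun e => (L e) ×ˢ Finset.range s₀) (c₀, 0) le_rfl hφprop ?_
  · obtain ⟨ω', hω'mem, hω'prop⟩ := hgal
    refine ⟨fun e => (ω' e).1, ?_, ?_⟩
    · intro e he
      have h1 := hω'mem e (SimpleGraph.mem_edgeFinset.mpr he)
      exact (Finset.mem_product.mp h1).1
    · intro v c
      have hset : G.incidenceSet v ∩ {e | (ω' e).1 = c}
          = ↑(G.edgeFinset.filter (fun e => v ∈ e ∧ (ω' e).1 = c)) := by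
        ext e
        simp only [Set.mem_inter_iff, Set.mem_setOf_eq, Finset.coe_filter, Finset.mem_coe,
          SimpleGraph.mem_edgeFinset]
        constructor
        · rintro ⟨⟨h1, h2⟩, h3⟩
          exact ⟨h1, h2, h3⟩
        · rintro ⟨h1, h2, h3⟩
          exact ⟨⟨h1, h2⟩, h3⟩
      rw [hset, Set.ncard_coe_finset]
      -- counting
      have hsplit : G.edgeFinset.filter (fun e => v ∈ e ∧ (ω' e).1 = c) ⊆
          (G.edgeFinset.filter (fun e => T e = v ∧ (ω' e).1 = c)) ∪
          (G.edgeFinset.filter (fun e => H e = v ∧ (ω' e).1 = c)) := by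
        intro e he
        obtain ⟨heE, hev, hec⟩ := Finset.mem_filter.mp he
        rcases (hmem2 e heE v).mp hev with h1 | h1
        · exact Finset.mem_union_left _ (Finset.mem_filter.mpr ⟨heE, h1.symm, hec⟩)
        · exact Finset.mem_union_right _ (Finset.mem_filter.mpr ⟨heE, h1.symm, hec⟩)
      have hcount1 : (G.edgeFinset.filter (fun e => T e = v ∧ (ω' e).1 = c)).card ≤ s₀ := by
        have h1 : (G.edgeFinset.filter (fun e => T e = v ∧ (ω' e).1 = c)).card
            ≤ ({c} ×ˢ Finset.range s₀).card := by
          apply Finset.card_le_card_of_injOn ω'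
          · intro e he
            obtain ⟨heE, _, hec⟩ := Finset.mem_filter.mp he
            have h2 := hω'mem e heE
            refine Finset.mem_product.mpr ⟨?_, (Finset.mem_product.mp h2).2⟩
            rw [Finset.mem_singleton]
            exact hec
          · intro e he f hf hef
            rw [Finset.mem_coe, Finset.mem_filter] at he hf
            by_contra hne
            exact hω'prop e he.1 f hf.1 hne (Or.inl (he.2.1.trans hf.2.1.symm)) hef
        rw [Finset.card_product, Finset.card_singleton, Finset.card_range, one_mul] at h1
        exact h1
      have hcount2 : (G.edgeFinset.filter (fun e => H e = v ∧ (ω' e).1 = c)).card ≤ s₀ := by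
        have h1 : (G.edgeFinset.filter (fun e => H e = v ∧ (ω' e).1 = c)).card
            ≤ ({c} ×ˢ Finset.range s₀).card := by
          apply Finset.card_le_card_of_injOn ω'
          · intro e he
            obtain ⟨heE, _, hec⟩ := Finset.mem_filter.mp he
            have h2 := hω'mem e heE
            refine Finset.mem_product.mpr ⟨?_, (Finset.mem_product.mp h2).2⟩
            rw [Finset.mem_singleton]
            exact hec
          · intro e he f hf hef
            rw [Finset.mem_coe, Finset.mem_filter] at he hf
            by_contra hne
            exact hω'prop e he.1 f hf.1 hne (Or.inr (he.2.1.trans hf.2.1.symm)) hef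
        rw [Finset.card_product, Finset.card_singleton, Finset.card_range, one_mul] at h1
        exact h1
      have hcount : (G.edgeFinset.filter (fun e => v ∈ e ∧ (ω' e).1 = c)).card ≤ s₀ + s₀ :=
        le_trans (le_trans (Finset.card_le_card hsplit) (Finset.card_union_le _ _))
          (Nat.add_le_add hcount1 hcount2)
      -- convert to the real inequality
      have htt' : (G.edgeFinset.filter (fun e => v ∈ e ∧ (ω' e).1 = c)).card ≤ tt := by
        omega
      rw [hreg v]
      rw [le_div_iff₀ (by positivity : (0:ℝ) < (k:ℝ))]
      have hcast : ((G.edgeFinset.filter (fun e => v ∈ e ∧ (ω' e).1 = c)).card : ℝ)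
          ≤ (tt : ℝ) := by exact_mod_cast htt'
      have h2 : (tt : ℝ) * (k : ℝ) ≤ (d : ℝ) := by exact_mod_cast htk
      refine le_trans (mul_le_mul_of_nonneg_right hcast ?_) h2
      positivity
  · -- the Galvin counting hypothesis
    intro e he
    have hLcard : ((L e) ×ˢ Finset.range s₀).card = n := by
      rw [Finset.card_product, Finset.card_range, hL e (SimpleGraph.mem_edgeFinset.mp he), hn]
    rw [hLcard]
    have hA1 : (G.edgeFinset.filter (fun f => f ≠ e ∧ T f = T e ∧ φ e < φ f)).card
        ≤ n - 1 - φ e := by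
      have h1 : (G.edgeFinset.filter (fun f => f ≠ e ∧ T f = T e ∧ φ e < φ f)).card
          ≤ (Finset.Ico (φ e + 1) n).card := by
        apply Finset.card_le_card_of_injOn φ
        · intro f hf
          obtain ⟨hfE, _, _, hφf⟩ := Finset.mem_filter.mp hf
          exact Finset.mem_Ico.mpr ⟨by omega, hφlt f hfE⟩
        · intro f hf g hg hfg
          rw [Finset.mem_coe, Finset.mem_filter] at hf hg
          by_contra hne
          exact hφprop f hf.1 g hg.1 hne (Or.inl (hf.2.2.1.trans hg.2.2.1.symm)) hfg
      rw [Nat.card_Ico] at h1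
      omega
    have hA2 : (G.edgeFinset.filter (fun f => f ≠ e ∧ H f = H e ∧ φ f < φ e)).card
        ≤ φ e := by
      have h1 : (G.edgeFinset.filter (fun f => f ≠ e ∧ H f = H e ∧ φ f < φ e)).card
          ≤ (Finset.range (φ e)).card := by
        apply Finset.card_le_card_of_injOn φ
        · intro f hf
          obtain ⟨hfE, _, _, hφf⟩ := Finset.mem_filter.mp hf
          exact Finset.mem_range.mpr hφf
        · intro f hf g hg hfg
          rw [Finset.mem_coe, Finset.mem_filter] at hf hg
          by_contra hne
          exact hφprop f hf.1 g hg.1 hne (Or.inr (hf.2.2.1.trans hg.2.2.1.symm)) hfg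
      rw [Finset.card_range] at h1
      exact h1
    have hsub : G.edgeFinset.filter (fun f => f ≠ e ∧
        ((T f = T e ∧ φ e < φ f) ∨ (H f = H e ∧ φ f < φ e))) ⊆
        (G.edgeFinset.filter (fun f => f ≠ e ∧ T f = T e ∧ φ e < φ f)) ∪
        (G.edgeFinset.filter (fun f => f ≠ e ∧ H f = H e ∧ φ f < φ e)) := by
      intro f hf
      obtain ⟨hfE, hne, hcase⟩ := Finset.mem_filter.mp hf
      rcases hcase with h1 | h1
      · exact Finset.mem_union_left _ (Finset.mem_filter.mpr ⟨hfE, hne, h1⟩)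
      · exact Finset.mem_union_right _ (Finset.mem_filter.mpr ⟨hfE, hne, h1⟩)
    have h2 := le_trans (le_trans (Finset.card_le_card hsub) (Finset.card_union_le _ _))
      (Nat.add_le_add hA1 hA2)
    have h3 := hφlt e he
    omega
end

section
/- For every finite simple graph G = (V,E) and every positive integer k, there exists an edge colouring ω:E→{1,…,k} such that for every vertex v ∈ V and all colours i, j ∈ {1,…,k}, |d_{E_i}(v) − d_{E_j}(v)| ≤ 2; that is, the k-discrepancy 𝒟_k(G) is at most 2. -/
open Finset

namespace KDisc

variable {V : Type*} [Fintype V] [DecidableEq V] (G : SimpleGraph V) [DecidableRel G.Adj]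
variable {k : ℕ}

def Dd (ω : Sym2 V → Fin k) (c : Fin k) (x : V) : ℕ :=
  ((G.incidenceFinset x).filter (fun e => ω e = c)).card

def Phi (ω : Sym2 V → Fin k) : ℤ := ∑ x : V, ∑ c : Fin k, ((Dd G ω c x : ℤ)) ^ 2

def cnt (ω : Sym2 V → Fin k) (c : Fin k) (used : Finset (Sym2 V)) (x : V) : ℕ :=
  ((G.incidenceFinset x).filter (fun e => e ∈ used ∧ ω e = c)).card

def flipC (i j : Fin k) (ω : Sym2 V → Fin k) (used : Finset (Sym2 V)) : Sym2 V → Fin k :=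
  fun e => if e ∈ used then (if ω e = i then j else if ω e = j then i else ω e) else ω e

lemma cnt_le (ω : Sym2 V → Fin k) (c : Fin k) (used : Finset (Sym2 V)) (x : V) :
    cnt G ω c used x ≤ Dd G ω c x := by
  apply Finset.card_le_card
  intro e he
  simp only [mem_filter] at he ⊢
  exact ⟨he.1, he.2.2⟩

lemma Dd_flip_i {i j : Fin k} (hij : i ≠ j) (ω : Sym2 V → Fin k) (used : Finset (Sym2 V)) (x : V) :
    Dd G (flipC i j ω used) i x + cnt G ω i used x = Dd G ω i x + cnt G ω j used x := by
  simp only [Dd, cnt, Finset.card_filter, ← Finset.sum_add_distrib]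
  refine Finset.sum_congr rfl fun e _ => ?_
  by_cases hu : e ∈ used <;> by_cases h1 : ω e = i <;> by_cases h2 : ω e = j <;>
    simp_all [flipC, Ne.symm hij]

lemma Dd_flip_j {i j : Fin k} (hij : i ≠ j) (ω : Sym2 V → Fin k) (used : Finset (Sym2 V)) (x : V) :
    Dd G (flipC i j ω used) j x + cnt G ω j used x = Dd G ω j x + cnt G ω i used x := by
  simp only [Dd, cnt, Finset.card_filter, ← Finset.sum_add_distrib]
  refine Finset.sum_congr rfl fun e _ => ?_
  by_cases hu : e ∈ used <;> by_cases h1 : ω e = i <;> by_cases h2 : ω e = j <;>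
    simp_all [flipC, Ne.symm hij]

lemma Dd_flip_other {i j c : Fin k} (hci : c ≠ i) (hcj : c ≠ j) (ω : Sym2 V → Fin k)
    (used : Finset (Sym2 V)) (x : V) :
    Dd G (flipC i j ω used) c x = Dd G ω c x := by
  simp only [Dd, Finset.card_filter]
  refine Finset.sum_congr rfl fun e _ => ?_
  by_cases hu : e ∈ used <;> by_cases h1 : ω e = i <;> by_cases h2 : ω e = j <;>
    simp_all [flipC, Ne.symm hci, Ne.symm hcj]

lemma cnt_insert (ω : Sym2 V → Fin k) (c : Fin k) (used : Finset (Sym2 V)) (e : Sym2 V)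
    (he : e ∉ used) (x : V) :
    cnt G ω c (insert e used) x
      = cnt G ω c used x + if e ∈ G.incidenceFinset x ∧ ω e = c then 1 else 0 := by
  simp only [cnt]
  by_cases hin : e ∈ G.incidenceFinset x ∧ ω e = c
  · have hset : (G.incidenceFinset x).filter (fun e' => e' ∈ insert e used ∧ ω e' = c)
        = insert e ((G.incidenceFinset x).filter (fun e' => e' ∈ used ∧ ω e' = c)) := by
      ext e'
      simp only [mem_filter, mem_insert]
      constructor
      · rintro ⟨hS, (rfl | hu), hc⟩
        · exact Or.inl rfl
        · exact Or.inr ⟨hS, hu, hc⟩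
      · rintro (rfl | ⟨hS, hu, hc⟩)
        · exact ⟨hin.1, Or.inl rfl, hin.2⟩
        · exact ⟨hS, Or.inr hu, hc⟩
    rw [hset, card_insert_of_notMem (by simp [he]), if_pos hin]
  · have hset : (G.incidenceFinset x).filter (fun e' => e' ∈ insert e used ∧ ω e' = c)
        = (G.incidenceFinset x).filter (fun e' => e' ∈ used ∧ ω e' = c) := by
      ext e'
      simp only [mem_filter, mem_insert]
      constructor
      · rintro ⟨hS, (rfl | hu), hc⟩
        · exact absurd ⟨hS, hc⟩ hin
        · exact ⟨hS, hu, hc⟩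
      · rintro ⟨hS, hu, hc⟩
        exact ⟨hS, Or.inr hu, hc⟩
    rw [hset, if_neg hin, add_zero]

lemma phi_flip {i j : Fin k} (hij : i ≠ j) (ω : Sym2 V → Fin k) (used : Finset (Sym2 V)) :
    Phi G (flipC i j ω used) = Phi G ω + ∑ x : V,
      (2 * ((cnt G ω i used x : ℤ) - (cnt G ω j used x : ℤ)) *
        (((cnt G ω i used x : ℤ) - (cnt G ω j used x : ℤ))
          + (Dd G ω j x : ℤ) - (Dd G ω i x : ℤ))) := by
  rw [Phi, Phi, ← Finset.sum_add_distrib]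
  refine Finset.sum_congr rfl fun x _ => ?_
  have hDi : ((Dd G (flipC i j ω used) i x : ℤ))
      = (Dd G ω i x : ℤ) - (cnt G ω i used x : ℤ) + (cnt G ω j used x : ℤ) := by
    have h := Dd_flip_i G hij ω used x
    have h2 : ((Dd G (flipC i j ω used) i x : ℤ)) + (cnt G ω i used x : ℤ)
        = (Dd G ω i x : ℤ) + (cnt G ω j used x : ℤ) := by exact_mod_cast h
    linarith
  have hDj : ((Dd G (flipC i j ω used) j x : ℤ))
      = (Dd G ω j x : ℤ) - (cnt G ω j used x : ℤ) + (cnt G ω i used x : ℤ) := by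
    have h := Dd_flip_j G hij ω used x
    have h2 : ((Dd G (flipC i j ω used) j x : ℤ)) + (cnt G ω j used x : ℤ)
        = (Dd G ω j x : ℤ) + (cnt G ω i used x : ℤ) := by exact_mod_cast h
    linarith
  have hrest : ∀ c ∈ (univ : Finset (Fin k)) \ {i, j},
      ((Dd G (flipC i j ω used) c x : ℤ)) ^ 2 = ((Dd G ω c x : ℤ)) ^ 2 := by
    intro c hc
    simp only [mem_sdiff, mem_insert, mem_singleton] at hc
    rw [Dd_flip_other G (fun h => hc.2 (Or.inl h)) (fun h => hc.2 (Or.inr h))]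
  rw [← Finset.sum_sdiff (Finset.subset_univ ({i, j} : Finset (Fin k)))
        (f := fun c => ((Dd G (flipC i j ω used) c x : ℤ)) ^ 2),
      ← Finset.sum_sdiff (Finset.subset_univ ({i, j} : Finset (Fin k)))
        (f := fun c => ((Dd G ω c x : ℤ)) ^ 2),
      Finset.sum_pair hij, Finset.sum_pair hij, Finset.sum_congr rfl hrest, hDi, hDj]
  ring

lemma exists_unused (ω : Sym2 V → Fin k) (c : Fin k) (used : Finset (Sym2 V)) (x : V)
    (h : cnt G ω c used x < Dd G ω c x) :
    ∃ e, e ∈ G.incidenceFinset x ∧ ω e = c ∧ e ∉ used := by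
  by_contra hc
  push_neg at hc
  have hsub : (G.incidenceFinset x).filter (fun e => ω e = c)
      ⊆ (G.incidenceFinset x).filter (fun e => e ∈ used ∧ ω e = c) := by
    intro e he
    simp only [mem_filter] at he ⊢
    exact ⟨he.1, hc e he.1 he.2, he.2⟩
  have h2 : Dd G ω c x ≤ cnt G ω c used x := Finset.card_le_card hsub
  omega

lemma exists_other (e : Sym2 V) (x : V) (he : e ∈ G.incidenceFinset x) :
    ∃ y, x ≠ y ∧ e = s(x, y) := by
  rw [SimpleGraph.mem_incidenceFinset] at he
  obtain ⟨he1, he2⟩ := he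
  induction e using Sym2.ind with
  | _ a b =>
    rw [SimpleGraph.mem_edgeSet] at he1
    rcases Sym2.mem_iff.1 he2 with rfl | rfl
    · exact ⟨b, (G.ne_of_adj he1), rfl⟩
    · exact ⟨a, (G.ne_of_adj he1).symm, Sym2.eq_swap⟩


lemma mem_incidence_pair (w w' : V) (heE : s(w, w') ∈ G.edgeFinset) (x : V) :
    (s(w, w') ∈ G.incidenceFinset x) ↔ (x = w ∨ x = w') := by
  rw [SimpleGraph.mem_incidenceFinset]
  constructor
  · rintro ⟨-, hx⟩
    simpa [Sym2.mem_iff] using hx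
  · intro hx
    exact ⟨(SimpleGraph.mem_edgeFinset).1 heE, Sym2.mem_iff.2 hx⟩

lemma cnt_insert_pair (ω : Sym2 V → Fin k) (c : Fin k) (used : Finset (Sym2 V)) (w w' : V)
    (hww' : w ≠ w') (he : s(w, w') ∉ used) (heE : s(w, w') ∈ G.edgeFinset)
    (hc : ω s(w, w') = c) (x : V) :
    cnt G ω c (insert (s(w, w')) used) x
      = cnt G ω c used x + ((if x = w then 1 else 0) + (if x = w' then 1 else 0)) := by
  rw [cnt_insert G ω c used _ he x]
  congr 1
  by_cases h2 : x = w
  · subst h2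
    by_cases h3 : x = w'
    · exact absurd h3 hww'
    · simp [mem_incidence_pair G _ _ heE, hc, h3]
  · by_cases h3 : x = w'
    · subst h3
      simp [mem_incidence_pair G _ _ heE, hc, h2]
    · simp [mem_incidence_pair G _ _ heE, hc, h2, h3]

lemma cnt_insert_other (ω : Sym2 V → Fin k) (c c' : Fin k) (used : Finset (Sym2 V))
    (e : Sym2 V) (he : e ∉ used) (hc : ω e = c') (hcc : c' ≠ c) (x : V) :
    cnt G ω c (insert e used) x = cnt G ω c used x := by
  rw [cnt_insert G ω c used _ he x, if_neg, add_zero]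
  rintro ⟨-, h⟩
  exact hcc (hc ▸ h)

lemma descend {i j : Fin k} (hij : i ≠ j) (ω : Sym2 V → Fin k) (v : V)
    (hv : Dd G ω j v + 3 ≤ Dd G ω i v) :
    ∀ (n : ℕ) (used : Finset (Sym2 V)) (w : V) (b : Bool),
      used ⊆ G.edgeFinset →
      G.edgeFinset.card ≤ used.card + n →
      (∀ x : V, (cnt G ω i used x : ℤ) - (cnt G ω j used x : ℤ)
          = (if x = v then 1 else 0) + (cond b 1 (-1)) * (if x = w then (1 : ℤ) else 0)) →
      ∃ ω' : Sym2 V → Fin k, Phi G ω' < Phi G ω := by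
  have hvZ : (Dd G ω j v : ℤ) + 3 ≤ (Dd G ω i v : ℤ) := by exact_mod_cast hv
  intro n
  induction n using Nat.strong_induction_on with
  | _ n ih =>
  intro used w b hsub hcard hinv
  cases b with
  | true =>
    simp only [Bool.cond_true, one_mul] at hinv
    by_cases hwv : w = v
    · -- closed at v with an extra i-edge; flip wins
      subst hwv
      refine ⟨flipC i j ω used, ?_⟩
      rw [phi_flip G hij ω used]
      have hsum : ∑ x : V,
          (2 * ((cnt G ω i used x : ℤ) - (cnt G ω j used x : ℤ)) *
            (((cnt G ω i used x : ℤ) - (cnt G ω j used x : ℤ))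
              + (Dd G ω j x : ℤ) - (Dd G ω i x : ℤ)))
          = 2 * 2 * (2 + (Dd G ω j w : ℤ) - (Dd G ω i w : ℤ)) := by
        rw [Finset.sum_eq_single w]
        · have h := hinv w
          rw [if_pos rfl] at h
          have h' : (cnt G ω i used w : ℤ) - (cnt G ω j used w : ℤ) = 2 := by linarith
          rw [h']
        · intro x _ hx
          have h := hinv x
          rw [if_neg hx] at h
          have h' : (cnt G ω i used x : ℤ) - (cnt G ω j used x : ℤ) = 0 := by linarith
          rw [h']; ring
        · intro h; exact absurd (mem_univ w) h
      rw [hsum]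
      linarith
    · by_cases hstop : Dd G ω j w < Dd G ω i w
      · -- stop at w ≠ v, flip wins
        have hDZ : (Dd G ω j w : ℤ) + 1 ≤ (Dd G ω i w : ℤ) := by exact_mod_cast hstop
        refine ⟨flipC i j ω used, ?_⟩
        rw [phi_flip G hij ω used]
        have hzero : ∀ x ∈ (univ : Finset V), x ∉ ({v, w} : Finset V) →
            (2 * ((cnt G ω i used x : ℤ) - (cnt G ω j used x : ℤ)) *
              (((cnt G ω i used x : ℤ) - (cnt G ω j used x : ℤ))
                + (Dd G ω j x : ℤ) - (Dd G ω i x : ℤ))) = 0 := by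
          intro x _ hx
          simp only [mem_insert, mem_singleton, not_or] at hx
          have h := hinv x
          rw [if_neg hx.1, if_neg hx.2] at h
          have h' : (cnt G ω i used x : ℤ) - (cnt G ω j used x : ℤ) = 0 := by linarith
          rw [h']; ring
        rw [← Finset.sum_subset (Finset.subset_univ ({v, w} : Finset V)) hzero,
            Finset.sum_pair (fun h => hwv h.symm)]
        have hvw' : ¬v = w := fun h => hwv h.symm
        have h1 : (cnt G ω i used v : ℤ) - (cnt G ω j used v : ℤ) = 1 := by
          have h := hinv v
          rw [if_pos rfl, if_neg hvw'] at h
          linarith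
        have h2 : (cnt G ω i used w : ℤ) - (cnt G ω j used w : ℤ) = 1 := by
          have h := hinv w
          rw [if_pos rfl, if_neg hwv] at h
          linarith
        rw [h1, h2]
        linarith
      · -- continue with a fresh j-edge at w
        push_neg at hstop
        have hsZ : (Dd G ω i w : ℤ) ≤ (Dd G ω j w : ℤ) := by exact_mod_cast hstop
        have h1 : (cnt G ω i used w : ℤ) - (cnt G ω j used w : ℤ) = 1 := by
          have h := hinv w
          rw [if_pos rfl, if_neg hwv] at h
          linarith
        have h2 : cnt G ω j used w < Dd G ω j w := by
          have h3 := cnt_le G ω i used w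
          omega
        obtain ⟨e, heS, hej, heu⟩ := exists_unused G ω j used w h2
        obtain ⟨w', hww', rfl⟩ := exists_other G e w heS
        have heE : s(w, w') ∈ G.edgeFinset := by
          rw [SimpleGraph.mem_incidenceFinset] at heS
          exact (SimpleGraph.mem_edgeFinset).2 (G.incidenceSet_subset w heS)
        have hn : 1 ≤ n := by
          have hc2 := Finset.card_le_card (Finset.insert_subset heE hsub)
          rw [Finset.card_insert_of_notMem heu] at hc2
          omega
        refine ih (n - 1) (by omega) (insert (s(w, w')) used) w' false
          (Finset.insert_subset heE hsub)
          (by rw [Finset.card_insert_of_notMem heu]; omega) ?_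
        intro x
        simp only [Bool.cond_false]
        rw [cnt_insert_pair G ω j used w w' hww' heu heE hej x,
            cnt_insert_other G ω i j used _ heu hej (Ne.symm hij) x]
        have hx := hinv x
        push_cast
        linarith [hx]
  | false =>
    simp only [Bool.cond_false] at hinv
    by_cases hwv : w = v
    · -- always continue from v with a fresh i-edge
      subst hwv
      have h1 : (cnt G ω i used w : ℤ) - (cnt G ω j used w : ℤ) = 0 := by
        have h := hinv w
        rw [if_pos rfl] at h
        linarith
      have h2 : cnt G ω i used w < Dd G ω i w := by
        have h3 := cnt_le G ω j used w
        omega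
      obtain ⟨e, heS, hei, heu⟩ := exists_unused G ω i used w h2
      obtain ⟨w', hww', rfl⟩ := exists_other G e w heS
      have heE : s(w, w') ∈ G.edgeFinset := by
        rw [SimpleGraph.mem_incidenceFinset] at heS
        exact (SimpleGraph.mem_edgeFinset).2 (G.incidenceSet_subset w heS)
      have hn : 1 ≤ n := by
        have hc2 := Finset.card_le_card (Finset.insert_subset heE hsub)
        rw [Finset.card_insert_of_notMem heu] at hc2
        omega
      refine ih (n - 1) (by omega) (insert (s(w, w')) used) w' true
        (Finset.insert_subset heE hsub)
        (by rw [Finset.card_insert_of_notMem heu]; omega) ?_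
      intro x
      simp only [Bool.cond_true, one_mul]
      rw [cnt_insert_pair G ω i used w w' hww' heu heE hei x,
          cnt_insert_other G ω j i used _ heu hei hij x]
      have hx := hinv x
      push_cast
      linarith [hx]
    · by_cases hstop : Dd G ω i w < Dd G ω j w
      · -- stop at w ≠ v, flip wins
        have hDZ : (Dd G ω i w : ℤ) + 1 ≤ (Dd G ω j w : ℤ) := by exact_mod_cast hstop
        refine ⟨flipC i j ω used, ?_⟩
        rw [phi_flip G hij ω used]
        have hzero : ∀ x ∈ (univ : Finset V), x ∉ ({v, w} : Finset V) →
            (2 * ((cnt G ω i used x : ℤ) - (cnt G ω j used x : ℤ)) *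
              (((cnt G ω i used x : ℤ) - (cnt G ω j used x : ℤ))
                + (Dd G ω j x : ℤ) - (Dd G ω i x : ℤ))) = 0 := by
          intro x _ hx
          simp only [mem_insert, mem_singleton, not_or] at hx
          have h := hinv x
          rw [if_neg hx.1, if_neg hx.2] at h
          have h' : (cnt G ω i used x : ℤ) - (cnt G ω j used x : ℤ) = 0 := by linarith
          rw [h']; ring
        rw [← Finset.sum_subset (Finset.subset_univ ({v, w} : Finset V)) hzero,
            Finset.sum_pair (fun h => hwv h.symm)]
        have hvw' : ¬v = w := fun h => hwv h.symm
        have h1 : (cnt G ω i used v : ℤ) - (cnt G ω j used v : ℤ) = 1 := by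
          have h := hinv v
          rw [if_pos rfl, if_neg hvw'] at h
          linarith
        have h2 : (cnt G ω i used w : ℤ) - (cnt G ω j used w : ℤ) = -1 := by
          have h := hinv w
          rw [if_pos rfl, if_neg hwv] at h
          linarith
        rw [h1, h2]
        linarith
      · -- continue with a fresh i-edge at w
        push_neg at hstop
        have hsZ : (Dd G ω j w : ℤ) ≤ (Dd G ω i w : ℤ) := by exact_mod_cast hstop
        have h1 : (cnt G ω i used w : ℤ) - (cnt G ω j used w : ℤ) = -1 := by
          have h := hinv w
          rw [if_pos rfl, if_neg hwv] at h
          linarith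
        have h2 : cnt G ω i used w < Dd G ω i w := by
          have h3 := cnt_le G ω j used w
          omega
        obtain ⟨e, heS, hei, heu⟩ := exists_unused G ω i used w h2
        obtain ⟨w', hww', rfl⟩ := exists_other G e w heS
        have heE : s(w, w') ∈ G.edgeFinset := by
          rw [SimpleGraph.mem_incidenceFinset] at heS
          exact (SimpleGraph.mem_edgeFinset).2 (G.incidenceSet_subset w heS)
        have hn : 1 ≤ n := by
          have hc2 := Finset.card_le_card (Finset.insert_subset heE hsub)
          rw [Finset.card_insert_of_notMem heu] at hc2
          omega
        refine ih (n - 1) (by omega) (insert (s(w, w')) used) w' true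
          (Finset.insert_subset heE hsub)
          (by rw [Finset.card_insert_of_notMem heu]; omega) ?_
        intro x
        simp only [Bool.cond_true, one_mul]
        rw [cnt_insert_pair G ω i used w w' hww' heu heE hei x,
            cnt_insert_other G ω j i used _ heu hei hij x]
        have hx := hinv x
        push_cast
        linarith [hx]


lemma descend_start {i j : Fin k} (hij : i ≠ j) (ω : Sym2 V → Fin k) (v : V)
    (hv : Dd G ω j v + 3 ≤ Dd G ω i v) :
    ∃ ω' : Sym2 V → Fin k, Phi G ω' < Phi G ω := by
  have hc0 : cnt G ω i ∅ v = 0 := by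
    simp [cnt]
  have h2 : cnt G ω i ∅ v < Dd G ω i v := by omega
  obtain ⟨e, heS, hei, -⟩ := exists_unused G ω i ∅ v h2
  obtain ⟨w1, hvw1, rfl⟩ := exists_other G e v heS
  have heE : s(v, w1) ∈ G.edgeFinset := by
    rw [SimpleGraph.mem_incidenceFinset] at heS
    exact (SimpleGraph.mem_edgeFinset).2 (G.incidenceSet_subset v heS)
  refine descend G hij ω v hv G.edgeFinset.card {s(v, w1)} w1 true ?_ ?_ ?_
  · rw [Finset.singleton_subset_iff]
    exact heE
  · simp
  · intro x
    have hpair := cnt_insert_pair G ω i ∅ v w1 hvw1 (Finset.notMem_empty _) heE hei x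
    have hother := cnt_insert_other G ω j i ∅ (s(v, w1)) (Finset.notMem_empty _) hei hij x
    have hci : cnt G ω i ∅ x = 0 := by simp [cnt]
    have hcj : cnt G ω j ∅ x = 0 := by simp [cnt]
    rw [show ({s(v, w1)} : Finset (Sym2 V)) = insert (s(v, w1)) ∅ from rfl, hpair, hother,
      hci, hcj]
    simp only [Bool.cond_true, one_mul]
    push_cast
    ring

theorem main_balance (hk : 0 < k) :
    ∃ ω : Sym2 V → Fin k, ∀ (v : V) (i j : Fin k), Dd G ω i v ≤ Dd G ω j v + 2 := by
  obtain ⟨ω, -, hmin⟩ := Finset.exists_min_image (univ : Finset (Sym2 V → Fin k)) (Phi G)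
    ⟨fun _ => ⟨0, hk⟩, mem_univ _⟩
  refine ⟨ω, fun v i j => ?_⟩
  by_contra h
  push_neg at h
  have hij : i ≠ j := by rintro rfl; omega
  obtain ⟨ω', hω'⟩ := descend_start G hij ω v (by omega)
  exact absurd (hmin ω' (mem_univ _)) (not_le.2 hω')

end KDisc

/-- For every finite simple graph `G` and every positive integer `k`,
there is an edge colouring with `k` colours such that at every vertex the numbers of
incident edges in any two colours differ by at most `2`; i.e. `𝒟_k(G) ≤ 2`. -/
theorem k_discrepancy_le_two
    {V : Type*} [Fintype V] [DecidableEq V] (G : SimpleGraph V) [DecidableRel G.Adj]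
    (k : ℕ) (hk : 0 < k) :
    ∃ ω : Sym2 V → Fin k,
      ∀ (v : V) (i j : Fin k),
        |((G.incidenceSet v ∩ {e | ω e = i}).ncard : ℤ) -
          ((G.incidenceSet v ∩ {e | ω e = j}).ncard : ℤ)| ≤ 2 := by
  obtain ⟨ω, hω⟩ := KDisc.main_balance G hk
  refine ⟨ω, fun v i j => ?_⟩
  have hset : ∀ c : Fin k,
      (G.incidenceSet v ∩ {e | ω e = c}).ncard = KDisc.Dd G ω c v := by
    intro c
    have hEq : G.incidenceSet v ∩ {e | ω e = c}
        = ↑((G.incidenceFinset v).filter (fun e => ω e = c)) := by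
      ext e
      simp [SimpleGraph.mem_incidenceFinset]
    rw [hEq, Set.ncard_coe_finset]
    rfl
  rw [hset, hset, abs_sub_le_iff]
  have h1 := hω v i j
  have h2 := hω v j i
  constructor <;> omega
end
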